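/- arXiv:2008.08359 — 7 statements merged into one kernel-verified Lean document; each statement's English description precedes it below -/
import Mathlib

section
/- Let n be a positive integer, let A be a real n×n matrix and γ_A' > 0 a constant with |e^{At}x| ≤ e^{−γ_A' t}|x| for all t ≤ 0 and x ∈ ℝ^n, and let 0 < γ, ε > 0 with εγ_A' < γ. Fix u₀ ∈ ℝ^n. Then for every pair Φ = (u,v) ∈ C_γ^−, the function K_A^ε(Φ)(t) := e^{εAt}u₀ + ε∫_0^t e^{εA(t−s)} f(u(s)+η(s), v(s)+ξ(s)) ds (t ≤ 0) is continuous on (−∞,0] and satisfies ‖K_A^ε(Φ)‖_γ^− ≤ C_A + (εL_f/(γ − εγ_A'))·‖Φ‖_γ^−, where C_A := |u₀| + L_f C_f/γ_A' + (εL_f/(γ − εγ_A'))(‖η‖_γ^− + ‖ξ‖_γ^−). -/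
open MeasureTheory Set Filter

noncomputable section

/-- `ℝ^n` with the Euclidean norm. -/
abbrev Vec (n : ℕ) := EuclideanSpace ℝ (Fin n)

/-- Action of an `n × n` real matrix on `ℝ^n`. -/
noncomputable def mApply {n : ℕ} (M : Matrix (Fin n) (Fin n) ℝ) (x : Vec n) : Vec n :=
  Matrix.toEuclideanLin M x

/-- The matrix exponential `e^{tA}`. -/
noncomputable def expM {n : ℕ} (A : Matrix (Fin n) (Fin n) ℝ) (t : ℝ) :
    Matrix (Fin n) (Fin n) ℝ :=
  NormedSpace.exp (t • A)

/-- The norm `‖u‖_γ^- = sup_{t ≤ 0} e^{γ t} ‖u t‖` on `C_γ^-`. -/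
noncomputable def cNorm {n : ℕ} (γ : ℝ) (u : ℝ → Vec n) : ℝ :=
  sSup ((fun t => Real.exp (γ * t) * ‖u t‖) '' Iic (0:ℝ))

/-- Membership in the Banach space `C_γ^-`: continuity on `(-∞, 0]` together with
finiteness of the norm `sup_{t ≤ 0} e^{γ t} ‖u t‖`. -/
def memCneg {n : ℕ} (γ : ℝ) (u : ℝ → Vec n) : Prop :=
  ContinuousOn u (Iic 0) ∧
    BddAbove ((fun t => Real.exp (γ * t) * ‖u t‖) '' Iic (0:ℝ))

/-- The `A`-component of the Lyapunov–Perron map: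
`K_A^ε(Φ)(t) = e^{εAt} u₀ + ε ∫_0^t e^{εA(t-s)} f(u(s)+η(s), v(s)+ξ(s)) ds`. -/
noncomputable def KA {n : ℕ} (A : Matrix (Fin n) (Fin n) ℝ) (ε : ℝ) (u₀ : Vec n)
    (f : Vec n → Vec n → Vec n) (η ξ u v : ℝ → Vec n) (t : ℝ) : Vec n :=
  mApply (expM A (ε * t)) u₀ +
    ε • ∫ s in (0:ℝ)..t, mApply (expM A (ε * (t - s))) (f (u s + η s) (v s + ξ s))

/-- The `B`-component of the Lyapunov–Perron map:
`K_B^ε(Φ)(t) = ∫_{-∞}^t e^{B(t-s)} g(u(s)+η(s), v(s)+ξ(s)) ds`. -/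
noncomputable def KB {n : ℕ} (B : Matrix (Fin n) (Fin n) ℝ)
    (g : Vec n → Vec n → Vec n) (η ξ u v : ℝ → Vec n) (t : ℝ) : Vec n :=
  ∫ s in Iic t, mApply (expM B (t - s)) (g (u s + η s) (v s + ξ s))

section aux

open intervalIntegral in
lemma integral_exp_mul_real {c : ℝ} (hc : c ≠ 0) (a b : ℝ) :
    (∫ x in a..b, Real.exp (c * x)) = (Real.exp (c * b) - Real.exp (c * a)) / c := by
  have D : ∀ x : ℝ, HasDerivAt (fun y : ℝ => Real.exp (c * y) / c) (Real.exp (c * x)) x := by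
    intro x
    rw [← mul_div_cancel_right₀ (Real.exp (c * x)) hc]
    apply ((Real.hasDerivAt_exp _).comp x _).div_const c
    simpa only [mul_one, id_eq] using (hasDerivAt_id x).const_mul c
  rw [integral_deriv_eq_sub' _ (funext fun x => (D x).deriv) fun x _ => (D x).differentiableAt]
  · ring
  · fun_prop

lemma mApply_mul {n : ℕ} (M N : Matrix (Fin n) (Fin n) ℝ) (x : Vec n) :
    mApply (M * N) x = mApply M (mApply N x) := by
  simp [mApply, Matrix.toEuclideanLin_apply, Matrix.mulVec_mulVec]

lemma expM_add {n : ℕ} (A : Matrix (Fin n) (Fin n) ℝ) (a b : ℝ) :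
    expM A (a + b) = expM A a * expM A b := by
  rw [expM, expM, expM, add_smul]
  exact Matrix.exp_add_of_commute _ _ (((Commute.refl A).smul_left a).smul_right b)

/-- `mApply` as a continuous linear map. -/
noncomputable def matCLM {n : ℕ} (M : Matrix (Fin n) (Fin n) ℝ) : Vec n →L[ℝ] Vec n :=
  LinearMap.toContinuousLinearMap (Matrix.toEuclideanLin M : Vec n →ₗ[ℝ] Vec n)

lemma matCLM_apply {n : ℕ} (M : Matrix (Fin n) (Fin n) ℝ) (x : Vec n) :
    matCLM M x = mApply M x := rfl

lemma continuous_matCLM {n : ℕ} :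
    Continuous (matCLM (n := n)) := by
  let L : Matrix (Fin n) (Fin n) ℝ →ₗ[ℝ] (Vec n →L[ℝ] Vec n) :=
    { toFun := matCLM
      map_add' := fun M N => by
        ext x; simp [matCLM, LinearMap.coe_toContinuousLinearMap', map_add]
      map_smul' := fun c M => by
        ext x; simp [matCLM, LinearMap.coe_toContinuousLinearMap', _root_.map_smul] }
  exact L.continuous_of_finiteDimensional

lemma continuous_expM {n : ℕ} (A : Matrix (Fin n) (Fin n) ℝ) :
    Continuous fun t : ℝ => expM A t := by
  letI : SeminormedRing (Matrix (Fin n) (Fin n) ℝ) := Matrix.linftyOpSemiNormedRing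
  letI : NormedRing (Matrix (Fin n) (Fin n) ℝ) := Matrix.linftyOpNormedRing
  letI : NormedAlgebra ℝ (Matrix (Fin n) (Fin n) ℝ) := Matrix.linftyOpNormedAlgebra
  letI : NormedAlgebra ℚ (Matrix (Fin n) (Fin n) ℝ) := Matrix.linftyOpNormedAlgebra
  exact (NormedSpace.exp_continuous (𝔸 := Matrix (Fin n) (Fin n) ℝ)).comp (continuous_id.smul continuous_const)

end aux
lemma final_algebra {γA' γ ε Lf Cf M E1 E2 Ec2 u0n : ℝ}
    (hγA' : 0 < γA') (hε : 0 < ε) (hεγ : ε * γA' < γ) (hLf : 0 < Lf) (hCf : 0 < Cf)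
    (hM : 0 ≤ M) (hu0 : 0 ≤ u0n) (hEc2pos : 0 < Ec2) (hEc2le1 : Ec2 ≤ 1)
    (hE1pos : 0 < E1) (hE1le1 : E1 ≤ 1) (hE2pos : 0 < E2) (f3 : Ec2 * E2 = 1) :
    Ec2*u0n + (ε*Lf*Cf)*(Ec2*(1-E1))/(ε*γA') + (ε*Lf*M)*(Ec2*(1-E2))/(ε*γA'-γ) ≤
      u0n + Lf*Cf/γA' + (ε*Lf*M)/(γ - ε*γA') := by
  have hc₁pos : 0 < ε*γA' := mul_pos hε hγA'
  have hc₂pos : 0 < γ - ε*γA' := by linarith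
  have b0 : Ec2*u0n ≤ u0n := by nlinarith
  have b1 : (ε*Lf*Cf)*(Ec2*(1-E1))/(ε*γA') ≤ Lf*Cf/γA' := by
    rw [div_le_div_iff₀ hc₁pos hγA']
    have h11 : Ec2*(1-E1) ≤ 1 := by nlinarith
    have h12 : 0 ≤ Ec2*(1-E1) := by nlinarith
    nlinarith [mul_pos (mul_pos hε hLf) hCf, mul_pos (mul_pos (mul_pos hε hLf) hCf) hγA']
  have b2 : (ε*Lf*M)*(Ec2*(1-E2))/(ε*γA'-γ) ≤ (ε*Lf*M)/(γ - ε*γA') := by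
    have key : (ε*Lf*M)*(Ec2*(1-E2))/(ε*γA'-γ) = (ε*Lf*M)*(1-Ec2)/(γ-ε*γA') := by
      rw [div_eq_div_iff (ne_of_lt (by linarith : ε*γA' - γ < 0)) (ne_of_gt hc₂pos)]
      linear_combination (-((ε*Lf*M)*(γ-ε*γA')))*f3
    rw [key]
    have hnum : (ε*Lf*M)*(1-Ec2) ≤ (ε*Lf*M) := by
      nlinarith [mul_nonneg (mul_nonneg hε.le hLf.le) hM]
    exact (div_le_div_iff_of_pos_right hc₂pos).mpr hnum
  linarith

set_option maxHeartbeats 1000000 in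
/-- bound for the `A`-component of the Lyapunov–Perron map on `C_γ^-`. -/
theorem statement0
    (n : ℕ) (hn : 0 < n)
    (A : Matrix (Fin n) (Fin n) ℝ) (γA' : ℝ) (hγA' : 0 < γA')
    (hA : ∀ t ≤ (0:ℝ), ∀ x : Vec n, ‖mApply (expM A t) x‖ ≤ Real.exp (-γA' * t) * ‖x‖)
    (γ ε : ℝ) (hγ : 0 < γ) (hε : 0 < ε) (hεγ : ε * γA' < γ)
    (f : Vec n → Vec n → Vec n) (Lf Cf : ℝ) (hLf : 0 < Lf) (hCf : 0 < Cf)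
    (hfLip : ∀ x₁ y₁ x₂ y₂ : Vec n,
      ‖f x₁ y₁ - f x₂ y₂‖ ≤ Lf * (‖x₁ - x₂‖ + ‖y₁ - y₂‖))
    (hfGrow : ∀ x y : Vec n, ‖f x y‖ ≤ Lf * (Cf + ‖x‖ + ‖y‖))
    (η ξ : ℝ → Vec n) (hη : memCneg γ η) (hξ : memCneg γ ξ)
    (u₀ : Vec n) (u v : ℝ → Vec n) (hu : memCneg γ u) (hv : memCneg γ v) :
    ContinuousOn (KA A ε u₀ f η ξ u v) (Iic 0) ∧
      ∀ t ≤ (0:ℝ),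
        Real.exp (γ * t) * ‖KA A ε u₀ f η ξ u v t‖ ≤
          (‖u₀‖ + Lf * Cf / γA' +
              ε * Lf / (γ - ε * γA') * (cNorm γ η + cNorm γ ξ)) +
            ε * Lf / (γ - ε * γA') * (cNorm γ u + cNorm γ v) := by
  set c₁ : ℝ := ε * γA' with hc₁
  have hc₁pos : 0 < c₁ := mul_pos hε hγA'
  have hc₂pos : 0 < γ - c₁ := by linarith
  set F : ℝ → Vec n := fun s => f (u s + η s) (v s + ξ s) with hFdef
  -- continuity of f
  have hfc : Continuous fun p : Vec n × Vec n => f p.1 p.2 := by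
    apply LipschitzWith.continuous (K := (2*Lf).toNNReal)
    apply LipschitzWith.of_dist_le_mul
    rintro ⟨x₁, y₁⟩ ⟨x₂, y₂⟩
    rw [Real.coe_toNNReal _ (by positivity), Prod.dist_eq, dist_eq_norm, dist_eq_norm,
      dist_eq_norm]
    calc ‖f x₁ y₁ - f x₂ y₂‖ ≤ Lf * (‖x₁ - x₂‖ + ‖y₁ - y₂‖) := hfLip _ _ _ _
      _ ≤ 2 * Lf * max ‖x₁ - x₂‖ ‖y₁ - y₂‖ := by
          have h1 := le_max_left ‖x₁ - x₂‖ ‖y₁ - y₂‖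
          have h2 := le_max_right ‖x₁ - x₂‖ ‖y₁ - y₂‖
          nlinarith
  have hFc : ContinuousOn F (Iic 0) :=
    hfc.comp_continuousOn ((hu.1.add hη.1).prodMk (hv.1.add hξ.1))
  -- pointwise norm bounds from the cNorm
  have hpt : ∀ (w : ℝ → Vec n), memCneg γ w → ∀ s ≤ (0:ℝ),
      ‖w s‖ ≤ Real.exp (-(γ*s)) * cNorm γ w := by
    intro w hw s hs
    have h1 : Real.exp (γ*s) * ‖w s‖ ≤ cNorm γ w := le_csSup hw.2 ⟨s, hs, rfl⟩
    calc ‖w s‖ = Real.exp (-(γ*s)) * (Real.exp (γ*s) * ‖w s‖) := by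
          rw [← mul_assoc, ← Real.exp_add]; simp
      _ ≤ Real.exp (-(γ*s)) * cNorm γ w :=
          mul_le_mul_of_nonneg_left h1 (Real.exp_pos _).le
  have hcnn : ∀ (w : ℝ → Vec n), memCneg γ w → 0 ≤ cNorm γ w := by
    intro w hw
    refine le_trans (by positivity : (0:ℝ) ≤ Real.exp (γ*0) * ‖w 0‖) ?_
    exact le_csSup hw.2 ⟨0, Set.mem_Iic.mpr le_rfl, rfl⟩
  set M : ℝ := cNorm γ η + cNorm γ ξ + (cNorm γ u + cNorm γ v) with hM
  have hMnn : 0 ≤ M := by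
    have := hcnn η hη; have := hcnn ξ hξ; have := hcnn u hu; have := hcnn v hv
    rw [hM]; linarith
  have hFb : ∀ s ≤ (0:ℝ), ‖F s‖ ≤ Lf * (Cf + Real.exp (-(γ*s)) * M) := by
    intro s hs
    have h1 := hpt u hu s hs
    have h2 := hpt v hv s hs
    have h3 := hpt η hη s hs
    have h4 := hpt ξ hξ s hs
    have n1 := norm_add_le (u s) (η s)
    have n2 := norm_add_le (v s) (ξ s)
    have expand : Real.exp (-(γ*s)) * M =
        Real.exp (-(γ*s)) * cNorm γ η + Real.exp (-(γ*s)) * cNorm γ ξ +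
        (Real.exp (-(γ*s)) * cNorm γ u + Real.exp (-(γ*s)) * cNorm γ v) := by
      rw [hM]; ring
    have key : ‖u s + η s‖ + ‖v s + ξ s‖ ≤ Real.exp (-(γ*s)) * M := by
      rw [expand]; linarith
    calc ‖F s‖ ≤ Lf * (Cf + ‖u s + η s‖ + ‖v s + ξ s‖) := hfGrow _ _
      _ ≤ Lf * (Cf + Real.exp (-(γ*s)) * M) := by nlinarith
  -- the continuity part
  set G : ℝ → Vec n := fun s => mApply (expM A (-(ε*s))) (F s) with hGdef
  have hGc : ContinuousOn G (Iic 0) :=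
    ((continuous_matCLM.comp ((continuous_expM A).comp
      ((continuous_const.mul continuous_id).neg))).continuousOn).clm_apply hFc
  have hGint : ∀ t ≤ (0:ℝ), IntervalIntegrable G MeasureTheory.volume 0 t := by
    intro t ht
    refine (hGc.mono ?_).intervalIntegrable
    rw [Set.uIcc_of_ge ht]
    exact fun x hx => hx.2
  have hfactor : ∀ t s : ℝ, mApply (expM A (ε*(t-s))) (F s) = matCLM (expM A (ε*t)) (G s) := by
    intro t s
    rw [matCLM_apply, hGdef, show ε*(t-s) = ε*t + -(ε*s) by ring, expM_add, mApply_mul]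
  have hcont : ContinuousOn (KA A ε u₀ f η ξ u v) (Iic 0) := by
    have hPc : ContinuousOn (fun t => ∫ s in (0:ℝ)..t, G s) (Iic 0) := by
      intro t₀ ht₀
      have ht₀' : t₀ ≤ (0:ℝ) := ht₀
      have hle : t₀ - 1 ≤ (0:ℝ) := by linarith
      have hsub : Set.uIcc (0:ℝ) (t₀-1) ⊆ Iic 0 := by
        rw [Set.uIcc_of_ge hle]
        exact fun x hx => hx.2
      have h1 : ContinuousOn (fun t => ∫ s in (0:ℝ)..t, G s) (Set.uIcc (0:ℝ) (t₀-1)) :=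
        intervalIntegral.continuousOn_primitive_interval
          ((hGc.mono hsub).integrableOn_compact isCompact_uIcc)
      have hmem : Set.uIcc (0:ℝ) (t₀-1) ∈ nhdsWithin t₀ (Iic 0) := by
        refine Filter.mem_of_superset (Filter.inter_mem self_mem_nhdsWithin
          (mem_nhdsWithin_of_mem_nhds (Ioi_mem_nhds (by linarith : t₀ - 1 < t₀)))) ?_
        rw [Set.uIcc_of_ge hle]
        exact fun x hx => ⟨le_of_lt hx.2, hx.1⟩
      exact (h1 t₀ (by rw [Set.uIcc_of_ge hle]; exact ⟨by linarith, ht₀'⟩)).mono_of_mem_nhdsWithin hmem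
    have hec : Continuous fun t : ℝ => matCLM (expM A (ε*t)) :=
      continuous_matCLM.comp ((continuous_expM A).comp (continuous_const.mul continuous_id))
    have gcont : ContinuousOn
        (fun t => matCLM (expM A (ε*t)) u₀ + ε • matCLM (expM A (ε*t)) (∫ s in (0:ℝ)..t, G s))
        (Iic 0) :=
      ((hec.clm_apply continuous_const).continuousOn).add
        (((hec.continuousOn).clm_apply hPc).const_smul ε)
    refine gcont.congr ?_
    intro t ht
    have h1 : (∫ s in (0:ℝ)..t, mApply (expM A (ε*(t-s))) (F s)) =
        matCLM (expM A (ε*t)) (∫ s in (0:ℝ)..t, G s) := by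
      rw [← ContinuousLinearMap.intervalIntegral_comp_comm _ (hGint t ht)]
      exact intervalIntegral.integral_congr fun s _ => hfactor t s
    show KA A ε u₀ f η ξ u v t =
        matCLM (expM A (ε*t)) u₀ + ε • matCLM (expM A (ε*t)) (∫ s in (0:ℝ)..t, G s)
    rw [matCLM_apply, ← h1]
    simp only [KA, hFdef]
  refine ⟨hcont, ?_⟩
  intro t ht
  -- the bound
  set Bnd : ℝ → ℝ := fun s =>
    Real.exp (-γA' * (ε * (t - s))) * (Lf * (Cf + Real.exp (-(γ * s)) * M)) with hBnd
  have hBc : Continuous Bnd := by rw [hBnd]; fun_prop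
  have hBnn : ∀ s, 0 ≤ Bnd s := by
    intro s
    rw [hBnd]
    exact mul_nonneg (Real.exp_pos _).le (mul_nonneg hLf.le
      (add_nonneg hCf.le (mul_nonneg (Real.exp_pos _).le hMnn)))
  have hptbound : ∀ s ∈ Set.uIoc (0:ℝ) t, ‖mApply (expM A (ε*(t-s))) (F s)‖ ≤ Bnd s := by
    intro s hs
    rw [Set.uIoc_comm, Set.uIoc_of_le ht] at hs
    have hts : ε*(t-s) ≤ 0 := mul_nonpos_iff.mpr (Or.inl ⟨hε.le, by linarith [hs.1.le]⟩)
    calc ‖mApply (expM A (ε*(t-s))) (F s)‖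
        ≤ Real.exp (-γA'*(ε*(t-s))) * ‖F s‖ := hA _ hts _
      _ ≤ Bnd s := by
          rw [hBnd]
          exact mul_le_mul_of_nonneg_left (hFb s hs.2) (Real.exp_pos _).le
  have main1 : ‖mApply (expM A (ε*t)) u₀‖ ≤ Real.exp (-γA'*(ε*t)) * ‖u₀‖ :=
    hA _ (mul_nonpos_iff.mpr (Or.inl ⟨hε.le, ht⟩)) _
  have main2 : ‖∫ s in (0:ℝ)..t, mApply (expM A (ε*(t-s))) (F s)‖ ≤
      |∫ s in (0:ℝ)..t, Bnd s| :=
    intervalIntegral.norm_integral_le_abs_of_norm_le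
      (MeasureTheory.ae_restrict_of_forall_mem measurableSet_uIoc hptbound)
      (hBc.intervalIntegrable 0 t)
  have habs : |∫ s in (0:ℝ)..t, Bnd s| = ∫ s in t..(0:ℝ), Bnd s := by
    rw [intervalIntegral.integral_symm t 0, abs_neg,
      abs_of_nonneg (intervalIntegral.integral_nonneg ht fun s _ => hBnn s)]
  have hBsplit : ∀ s : ℝ, Bnd s = (Lf*Cf*Real.exp (c₁*(-t))) * Real.exp (c₁*s) +
      (Lf*M*Real.exp (c₁*(-t))) * Real.exp ((c₁-γ)*s) := by
    intro s
    have e1 : -γA'*(ε*(t-s)) = c₁*(-t) + c₁*s := by rw [hc₁]; ring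
    have e2 : -γA'*(ε*(t-s)) + -(γ*s) = c₁*(-t) + (c₁-γ)*s := by rw [hc₁]; ring
    calc Bnd s = Real.exp (-γA'*(ε*(t-s))) * (Lf*Cf) +
        Real.exp (-γA'*(ε*(t-s)) + -(γ*s)) * (Lf*M) := by
          rw [hBnd, Real.exp_add]; ring
      _ = _ := by rw [e2, e1, Real.exp_add, Real.exp_add (c₁*(-t))]; ring
  have hsplit : (∫ s in t..(0:ℝ), Bnd s) =
      (Lf*Cf*Real.exp (c₁*(-t))) * ((1 - Real.exp (c₁*t))/c₁) +
      (Lf*M*Real.exp (c₁*(-t))) * ((1 - Real.exp ((c₁-γ)*t))/(c₁-γ)) := by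
    simp only [hBsplit]
    rw [intervalIntegral.integral_add
        ((Continuous.intervalIntegrable (by fun_prop) _ _))
        ((Continuous.intervalIntegrable (by fun_prop) _ _)),
      intervalIntegral.integral_const_mul, intervalIntegral.integral_const_mul,
      integral_exp_mul_real (ne_of_gt hc₁pos),
      integral_exp_mul_real (ne_of_lt (by linarith : c₁ - γ < 0))]
    simp [mul_zero, Real.exp_zero]
  -- abbreviations for the final algebra
  set E1 := Real.exp (c₁*t) with hE1d
  set E2 := Real.exp ((c₁-γ)*t) with hE2d
  set Ec2 := Real.exp ((γ-c₁)*t) with hEc2d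
  set P := Real.exp (c₁*(-t)) with hPd
  have f2 : Real.exp (γ*t) * P = Ec2 := by
    rw [hPd, hEc2d, ← Real.exp_add]; congr 1; ring
  have f3 : Ec2 * E2 = 1 := by
    rw [hEc2d, hE2d, ← Real.exp_add, show (γ-c₁)*t + (c₁-γ)*t = 0 by ring, Real.exp_zero]
  have hexp1 : Real.exp (-γA'*(ε*t)) = P := by rw [hPd]; congr 1; rw [hc₁]; ring
  have hEc2pos : 0 < Ec2 := Real.exp_pos _
  have hEc2le1 : Ec2 ≤ 1 := by
    have h := Real.exp_le_exp.2 (show (γ-c₁)*t ≤ 0 from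
      mul_nonpos_iff.mpr (Or.inl ⟨by linarith, ht⟩))
    rwa [Real.exp_zero] at h
  have hE1pos : 0 < E1 := Real.exp_pos _
  have hE1le1 : E1 ≤ 1 := by
    have h := Real.exp_le_exp.2 (show c₁*t ≤ 0 from
      mul_nonpos_iff.mpr (Or.inl ⟨hc₁pos.le, ht⟩))
    rwa [Real.exp_zero] at h
  have hE2pos : 0 < E2 := Real.exp_pos _
  -- assemble
  have h0 : ‖KA A ε u₀ f η ξ u v t‖ ≤ P * ‖u₀‖ + ε * (∫ s in t..(0:ℝ), Bnd s) := by
    calc ‖KA A ε u₀ f η ξ u v t‖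
        = ‖mApply (expM A (ε*t)) u₀ + ε • ∫ s in (0:ℝ)..t, mApply (expM A (ε*(t-s))) (F s)‖ := by
          simp only [KA, hFdef]
      _ ≤ ‖mApply (expM A (ε*t)) u₀‖ +
          ‖ε • ∫ s in (0:ℝ)..t, mApply (expM A (ε*(t-s))) (F s)‖ := norm_add_le _ _
      _ = ‖mApply (expM A (ε*t)) u₀‖ +
          ε * ‖∫ s in (0:ℝ)..t, mApply (expM A (ε*(t-s))) (F s)‖ := by
          rw [norm_smul, Real.norm_eq_abs, abs_of_pos hε]
      _ ≤ Real.exp (-γA'*(ε*t)) * ‖u₀‖ + ε * |∫ s in (0:ℝ)..t, Bnd s| :=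
          add_le_add main1 (mul_le_mul_of_nonneg_left main2 hε.le)
      _ = P * ‖u₀‖ + ε * (∫ s in t..(0:ℝ), Bnd s) := by rw [hexp1, habs]
  calc Real.exp (γ*t) * ‖KA A ε u₀ f η ξ u v t‖
      ≤ Real.exp (γ*t) * (P * ‖u₀‖ + ε * (∫ s in t..(0:ℝ), Bnd s)) :=
        mul_le_mul_of_nonneg_left h0 (Real.exp_pos _).le
    _ = Ec2*‖u₀‖ + (ε*Lf*Cf)*(Ec2*(1-E1))/c₁ + (ε*Lf*M)*(Ec2*(1-E2))/(c₁-γ) := by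
        rw [hsplit, ← f2]; ring
    _ ≤ ‖u₀‖ + Lf*Cf/γA' + (ε*Lf*M)/(γ-c₁) := by
        rw [hc₁]
        exact final_algebra hγA' hε (by rw [← hc₁]; exact hεγ) hLf hCf hMnn (norm_nonneg u₀)
          hEc2pos hEc2le1 hE1pos hE1le1 hE2pos f3
    _ = (‖u₀‖ + Lf * Cf / γA' + ε * Lf / (γ - c₁) * (cNorm γ η + cNorm γ ξ)) +
        ε * Lf / (γ - c₁) * (cNorm γ u + cNorm γ v) := by
        rw [hM]; ring
end
end

section
/- Fix u₀ ∈ ℝ^n and let K^ε = (K_A^ε, K_B^ε) be the Lyapunov–Perron map and ρ(ε) := εL_f/(γ − εγ_A') + L_g/(γ_B − γ). Then K^ε maps C_γ^− into C_γ^−, and for every Φ ∈ C_γ^− one has ‖K^ε(Φ)‖_γ^− ≤ C₀ + ρ(ε)·‖Φ‖_γ^−, where C₀ := |u₀| + L_f C_f/γ_A' + L_g C_g/γ_B + ρ(ε)(‖η‖_γ^− + ‖ξ‖_γ^−). -/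
open MeasureTheory Set Filter

noncomputable section

/-! ### Auxiliary lemmas -/

set_option maxHeartbeats 1000000

lemma mApply_eq_clm {n : ℕ} (M : Matrix (Fin n) (Fin n) ℝ) (x : Vec n) :
    mApply M x = Matrix.toEuclideanCLM (𝕜 := ℝ) M x := by
  rw [mApply, ← Matrix.coe_toEuclideanCLM_eq_toEuclideanLin]; rfl

lemma contCLM {n : ℕ} :
    Continuous (fun M : Matrix (Fin n) (Fin n) ℝ => Matrix.toEuclideanCLM (𝕜 := ℝ) M) :=
  LinearMap.continuous_of_finiteDimensional
    (f := { toFun := fun M : Matrix (Fin n) (Fin n) ℝ => Matrix.toEuclideanCLM (𝕜 := ℝ) M,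
            map_add' := fun a b => map_add _ a b,
            map_smul' := fun c a => map_smul _ c a })

lemma toCLM_expM {n : ℕ} (A : Matrix (Fin n) (Fin n) ℝ) (t : ℝ) :
    Matrix.toEuclideanCLM (𝕜 := ℝ) (expM A t)
      = NormedSpace.exp (t • (Matrix.toEuclideanCLM (𝕜 := ℝ) A)) := by
  letI : SeminormedRing (Matrix (Fin n) (Fin n) ℝ) := Matrix.linftyOpSemiNormedRing
  letI : NormedRing (Matrix (Fin n) (Fin n) ℝ) := Matrix.linftyOpNormedRing
  letI : NormedAlgebra ℝ (Matrix (Fin n) (Fin n) ℝ) := Matrix.linftyOpNormedAlgebra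
  letI : NormedAlgebra ℚ (Matrix (Fin n) (Fin n) ℝ) := .restrictScalars ℚ ℝ _
  letI : NormedAlgebra ℚ (Vec n →L[ℝ] Vec n) := .restrictScalars ℚ ℝ _
  rw [expM]
  exact (NormedSpace.map_exp (𝔹 := EuclideanSpace ℝ (Fin n) →L[ℝ] EuclideanSpace ℝ (Fin n))
    (Matrix.toEuclideanCLM (𝕜 := ℝ)) contCLM (t • A)).trans (by rw [_root_.map_smul])

lemma expL_add {n : ℕ} (L : Vec n →L[ℝ] Vec n) (t s : ℝ) :
    NormedSpace.exp ((t + s) • L) = NormedSpace.exp (t • L) * NormedSpace.exp (s • L) := by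
  letI : NormedAlgebra ℚ (Vec n →L[ℝ] Vec n) := .restrictScalars ℚ ℝ _
  have hc : Commute (t • L) (s • L) := by
    ext x
    simp only [ContinuousLinearMap.mul_apply, ContinuousLinearMap.smul_apply, _root_.map_smul]
    rw [smul_comm]
  rw [add_smul t s L]
  exact NormedSpace.exp_add_of_commute hc

lemma my_integral_exp_mul {c : ℝ} (hc : c ≠ 0) (a b : ℝ) :
    ∫ s in a..b, Real.exp (c * s) = (Real.exp (c * b) - Real.exp (c * a)) / c := by
  rw [intervalIntegral.integral_comp_mul_left (fun x => Real.exp x) hc,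
    integral_exp, smul_eq_mul]
  ring

lemma my_integrableOn_exp_mul_Iic {c : ℝ} (hc : 0 < c) (s : ℝ) :
    IntegrableOn (fun r => Real.exp (c * r)) (Iic s) := by
  refine integrableOn_Iic_of_intervalIntegral_norm_bounded (Real.exp (c * s) / c) s
    (fun y => ((Real.continuous_exp.comp (continuous_const.mul continuous_id)).integrableOn_Ioc))
    tendsto_id (eventually_of_mem (Iic_mem_atBot s) fun y _ => ?_)
  simp_rw [Real.norm_of_nonneg (Real.exp_pos _).le, my_integral_exp_mul hc.ne']
  have := (Real.exp_pos (c * id y)).le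
  have h2 := Real.exp_pos (c * s)
  rw [div_le_div_iff_of_pos_right hc]
  linarith

lemma my_integral_exp_mul_Iic {c : ℝ} (hc : 0 < c) (s : ℝ) :
    ∫ r in Iic s, Real.exp (c * r) = Real.exp (c * s) / c := by
  refine tendsto_nhds_unique
    (intervalIntegral_tendsto_integral_Iic _ (my_integrableOn_exp_mul_Iic hc s) tendsto_id) ?_
  simp_rw [my_integral_exp_mul hc.ne']
  have : Tendsto (fun y : ℝ => Real.exp (c * y)) atBot (nhds 0) :=
    Real.tendsto_exp_atBot.comp (tendsto_id.const_mul_atBot hc)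
  have := ((tendsto_const_nhds (x := Real.exp (c * s))).sub this).div_const c
  simpa using this

lemma cNorm_bound {n : ℕ} {γ : ℝ} {u : ℝ → Vec n} (hu : memCneg γ u) {t : ℝ} (ht : t ≤ 0) :
    Real.exp (γ * t) * ‖u t‖ ≤ cNorm γ u :=
  le_csSup hu.2 (mem_image_of_mem _ ht)

lemma norm_le_cNorm {n : ℕ} {γ : ℝ} {u : ℝ → Vec n} (hu : memCneg γ u) {t : ℝ} (ht : t ≤ 0) :
    ‖u t‖ ≤ Real.exp (-(γ * t)) * cNorm γ u := by
  have h := cNorm_bound hu ht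
  have e := Real.exp_pos (γ * t)
  rw [Real.exp_neg, ← div_eq_inv_mul, le_div_iff₀ e]
  linarith [h, mul_comm ‖u t‖ (Real.exp (γ * t))]

lemma cNorm_nonneg {n : ℕ} {γ : ℝ} {u : ℝ → Vec n} (hu : memCneg γ u) : 0 ≤ cNorm γ u :=
  le_trans (by positivity) (cNorm_bound hu le_rfl)

lemma lip_continuous {n : ℕ} {f : Vec n → Vec n → Vec n} {Lf : ℝ} (hLf : 0 ≤ Lf)
    (hfLip : ∀ x₁ y₁ x₂ y₂ : Vec n, ‖f x₁ y₁ - f x₂ y₂‖ ≤ Lf * (‖x₁ - x₂‖ + ‖y₁ - y₂‖)) :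
    Continuous (fun p : Vec n × Vec n => f p.1 p.2) := by
  apply (LipschitzWith.of_dist_le_mul (K := (2 * Lf).toNNReal)
    (f := fun p : Vec n × Vec n => f p.1 p.2) ?_).continuous
  rintro ⟨x₁, y₁⟩ ⟨x₂, y₂⟩
  rw [dist_eq_norm]
  refine le_trans (hfLip x₁ y₁ x₂ y₂) ?_
  rw [Real.coe_toNNReal _ (by positivity)]
  have h1 : ‖x₁ - x₂‖ ≤ dist (x₁, y₁) (x₂, y₂) := by
    rw [← dist_eq_norm]; exact le_max_left _ _
  have h2 : ‖y₁ - y₂‖ ≤ dist (x₁, y₁) (x₂, y₂) := by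
    rw [← dist_eq_norm]; exact le_max_right _ _
  nlinarith [dist_nonneg (x := (x₁, y₁)) (y := (x₂, y₂))]

lemma tilde_cont {n : ℕ} {u : ℝ → Vec n} (hu : ContinuousOn u (Iic 0)) :
    Continuous (fun s => u (min s 0)) :=
  hu.comp_continuous (continuous_id.min continuous_const) (fun x => min_le_right x 0)

/-! ### The `KB` estimates -/

lemma KB_dom {γ γB Lg Cg M : ℝ} (hγ : 0 < γ) (hγγB : γ < γB) (s : ℝ) :
    (IntegrableOn (fun r => Real.exp (-γB * (s - r)) * (Lg * (Cg + Real.exp (-(γ * r)) * M)))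
        (Iic s)) ∧
      ∫ r in Iic s, Real.exp (-γB * (s - r)) * (Lg * (Cg + Real.exp (-(γ * r)) * M))
        = Lg * Cg / γB + Lg * M * Real.exp (-(γ * s)) / (γB - γ) := by
  have hγB : 0 < γB := hγ.trans hγγB
  have hbγ : 0 < γB - γ := by linarith
  have heq : ∀ r : ℝ, Real.exp (-γB * (s - r)) * (Lg * (Cg + Real.exp (-(γ * r)) * M))
      = (Lg * Cg * Real.exp (-γB * s)) * Real.exp (γB * r)
        + (Lg * M * Real.exp (-γB * s)) * Real.exp ((γB - γ) * r) := by
    intro r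
    rw [show (-γB * (s - r)) = -γB * s + γB * r by ring, Real.exp_add,
      show ((γB - γ) * r) = γB * r + -(γ * r) by ring, Real.exp_add]
    ring
  have hint1 := (my_integrableOn_exp_mul_Iic hγB s).const_mul (Lg * Cg * Real.exp (-γB * s))
  have hint2 := (my_integrableOn_exp_mul_Iic hbγ s).const_mul (Lg * M * Real.exp (-γB * s))
  have hint : IntegrableOn
      (fun r => Real.exp (-γB * (s - r)) * (Lg * (Cg + Real.exp (-(γ * r)) * M))) (Iic s) := by
    refine IntegrableOn.congr_fun (hint1.add hint2) (fun r _ => (heq r).symm) measurableSet_Iic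
  refine ⟨hint, ?_⟩
  calc ∫ r in Iic s, Real.exp (-γB * (s - r)) * (Lg * (Cg + Real.exp (-(γ * r)) * M))
      = ∫ r in Iic s, ((Lg * Cg * Real.exp (-γB * s)) * Real.exp (γB * r)
        + (Lg * M * Real.exp (-γB * s)) * Real.exp ((γB - γ) * r)) := by
        exact setIntegral_congr_fun measurableSet_Iic fun r _ => heq r
    _ = (Lg * Cg * Real.exp (-γB * s)) * (Real.exp (γB * s) / γB)
        + (Lg * M * Real.exp (-γB * s)) * (Real.exp ((γB - γ) * s) / (γB - γ)) := by
        rw [integral_add hint1 hint2, integral_const_mul, integral_const_mul,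
          my_integral_exp_mul_Iic hγB, my_integral_exp_mul_Iic hbγ]
    _ = Lg * Cg / γB + Lg * M * Real.exp (-(γ * s)) / (γB - γ) := by
        have e1 : Real.exp (-γB * s) * Real.exp (γB * s) = 1 := by
          rw [← Real.exp_add, show -γB * s + γB * s = 0 by ring, Real.exp_zero]
        have e2 : Real.exp (-γB * s) * Real.exp ((γB - γ) * s) = Real.exp (-(γ * s)) := by
          rw [← Real.exp_add, show -γB * s + (γB - γ) * s = -(γ * s) by ring]
        linear_combination (Lg * Cg / γB) * e1 + (Lg * M / (γB - γ)) * e2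

lemma KB_integrableOn {n : ℕ} (Bc : Vec n →L[ℝ] Vec n) {γ γB Lg Cg M : ℝ} {G : ℝ → Vec n}
    (hB : ∀ τ ≥ (0:ℝ), ∀ y : Vec n, ‖NormedSpace.exp (τ • Bc) y‖ ≤ Real.exp (-γB * τ) * ‖y‖)
    (hγ : 0 < γ) (hγγB : γ < γB) (hGc : Continuous G)
    (hG : ∀ r ≤ (0:ℝ), ‖G r‖ ≤ Lg * (Cg + Real.exp (-(γ * r)) * M))
    {s : ℝ} (hs : s ≤ 0) :
    IntegrableOn (fun r => NormedSpace.exp ((s - r) • Bc) (G r)) (Iic s) := by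
  letI : NormedAlgebra ℚ (Vec n →L[ℝ] Vec n) := .restrictScalars ℚ ℝ _
  have hcont : Continuous fun r => NormedSpace.exp ((s - r) • Bc) (G r) :=
    ((NormedSpace.exp_continuous.comp
      ((continuous_const.sub continuous_id).smul continuous_const))).clm_apply hGc
  refine Integrable.mono' (KB_dom (Lg := Lg) (Cg := Cg) (M := M) hγ hγγB s).1
    hcont.aestronglyMeasurable ?_
  rw [ae_restrict_iff' measurableSet_Iic]
  filter_upwards with r hr
  calc ‖NormedSpace.exp ((s - r) • Bc) (G r)‖
      ≤ Real.exp (-γB * (s - r)) * ‖G r‖ := hB _ (by simp only [mem_Iic] at hr; linarith) _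
    _ ≤ Real.exp (-γB * (s - r)) * (Lg * (Cg + Real.exp (-(γ * r)) * M)) := by
        have := hG r (le_trans (by simpa using hr) hs)
        exact mul_le_mul_of_nonneg_left this (Real.exp_pos _).le

lemma KB_bound {n : ℕ} (Bc : Vec n →L[ℝ] Vec n) {γ γB Lg Cg M : ℝ} {G : ℝ → Vec n}
    (hB : ∀ τ ≥ (0:ℝ), ∀ y : Vec n, ‖NormedSpace.exp (τ • Bc) y‖ ≤ Real.exp (-γB * τ) * ‖y‖)
    (hγ : 0 < γ) (hγγB : γ < γB) (hLg : 0 ≤ Lg) (hCg : 0 ≤ Cg) (hM : 0 ≤ M)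
    (hG : ∀ r ≤ (0:ℝ), ‖G r‖ ≤ Lg * (Cg + Real.exp (-(γ * r)) * M))
    {s : ℝ} (hs : s ≤ 0) :
    Real.exp (γ * s) * ‖∫ r in Iic s, NormedSpace.exp ((s - r) • Bc) (G r)‖
      ≤ Lg * Cg / γB + Lg / (γB - γ) * M := by
  have hγB : 0 < γB := hγ.trans hγγB
  have hdom := KB_dom (Lg := Lg) (Cg := Cg) (M := M) hγ hγγB s
  have hnorm : ‖∫ r in Iic s, NormedSpace.exp ((s - r) • Bc) (G r)‖
      ≤ ∫ r in Iic s, Real.exp (-γB * (s - r)) * (Lg * (Cg + Real.exp (-(γ * r)) * M)) := by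
    refine norm_integral_le_of_norm_le hdom.1 ?_
    rw [ae_restrict_iff' measurableSet_Iic]
    filter_upwards with r hr
    calc ‖NormedSpace.exp ((s - r) • Bc) (G r)‖
        ≤ Real.exp (-γB * (s - r)) * ‖G r‖ := hB _ (by simp only [mem_Iic] at hr; linarith) _
      _ ≤ Real.exp (-γB * (s - r)) * (Lg * (Cg + Real.exp (-(γ * r)) * M)) := by
          have := hG r (le_trans (by simpa using hr) hs)
          exact mul_le_mul_of_nonneg_left this (Real.exp_pos _).le
  rw [hdom.2] at hnorm
  have hexps : Real.exp (γ * s) ≤ 1 := Real.exp_le_one_iff.mpr (by nlinarith)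
  have hpos : 0 < Real.exp (γ * s) := Real.exp_pos _
  have key : Real.exp (γ * s) * (Lg * Cg / γB + Lg * M * Real.exp (-(γ * s)) / (γB - γ))
      = Real.exp (γ * s) * (Lg * Cg / γB) + Lg * M / (γB - γ) := by
    rw [mul_add]
    congr 1
    rw [show Real.exp (γ * s) * (Lg * M * Real.exp (-(γ * s)) / (γB - γ))
      = (Real.exp (γ * s) * Real.exp (-(γ * s))) * (Lg * M / (γB - γ)) by ring, ← Real.exp_add]
    simp
  have h1 : Real.exp (γ * s) * ‖∫ r in Iic s, NormedSpace.exp ((s - r) • Bc) (G r)‖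
      ≤ Real.exp (γ * s) * (Lg * Cg / γB) + Lg * M / (γB - γ) := by
    rw [← key]
    exact mul_le_mul_of_nonneg_left hnorm hpos.le
  have h2 : Real.exp (γ * s) * (Lg * Cg / γB) ≤ Lg * Cg / γB := by
    have : 0 ≤ Lg * Cg / γB := by positivity
    nlinarith
  have : Lg * M / (γB - γ) = Lg / (γB - γ) * M := by ring
  linarith

/-! ### The `KA` estimate -/

lemma KA_bound {n : ℕ} (Ac : Vec n →L[ℝ] Vec n) {γ γA' ε Lf Cf M : ℝ} {F : ℝ → Vec n}
    (u₀ : Vec n)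
    (hA : ∀ τ ≤ (0:ℝ), ∀ x : Vec n, ‖NormedSpace.exp (τ • Ac) x‖ ≤ Real.exp (-γA' * τ) * ‖x‖)
    (hγA' : 0 < γA') (hε : 0 < ε) (hεγ : ε * γA' < γ)
    (hLf : 0 ≤ Lf) (hCf : 0 ≤ Cf) (hM : 0 ≤ M)
    (hF : ∀ s ≤ (0:ℝ), ‖F s‖ ≤ Lf * (Cf + Real.exp (-(γ * s)) * M))
    {t : ℝ} (ht : t ≤ 0) :
    Real.exp (γ * t) * ‖NormedSpace.exp ((ε * t) • Ac) u₀ +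
        ε • ∫ s in (0:ℝ)..t, NormedSpace.exp ((ε * (t - s)) • Ac) (F s)‖
      ≤ ‖u₀‖ + Lf * Cf / γA' + ε * Lf / (γ - ε * γA') * M := by
  have hγ : 0 < γ := lt_trans (by positivity) hεγ
  set a := ε * γA' with ha
  have ha0 : 0 < a := by positivity
  have hag : a < γ := hεγ
  set g : ℝ → ℝ := fun r => Real.exp (-a * (t - r)) * (Lf * (Cf + Real.exp (-(γ * r)) * M))
    with hg
  have hgc : Continuous g :=
    ((Real.continuous_exp.comp ((continuous_const.mul (continuous_const.sub continuous_id))))).mul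
      (continuous_const.mul (continuous_const.add
        ((Real.continuous_exp.comp ((continuous_const.mul continuous_id).neg)).mul
          continuous_const)))
  have hptwise : ∀ r ∈ Set.uIoc t 0, ‖NormedSpace.exp ((ε * (t - r)) • Ac) (F r)‖ ≤ g r := by
    intro r hr
    rw [Set.mem_uIoc] at hr
    have hr1 : t < r ∧ r ≤ 0 := by
      rcases hr with h | h
      · exact ⟨h.1, h.2⟩
      · exact absurd h.1 (by linarith [h.2, ht])
    have hτ : ε * (t - r) ≤ 0 := by nlinarith [hr1.1.le]
    calc ‖NormedSpace.exp ((ε * (t - r)) • Ac) (F r)‖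
        ≤ Real.exp (-γA' * (ε * (t - r))) * ‖F r‖ := hA _ hτ _
      _ ≤ Real.exp (-a * (t - r)) * (Lf * (Cf + Real.exp (-(γ * r)) * M)) := by
          rw [show -γA' * (ε * (t - r)) = -a * (t - r) by rw [ha]; ring]
          exact mul_le_mul_of_nonneg_left (hF r hr1.2) (Real.exp_pos _).le
  have hX1 : Real.exp (a * t) ≤ 1 := Real.exp_le_one_iff.mpr (by nlinarith)
  have hZ1 : 1 ≤ Real.exp ((a - γ) * t) := by
    rw [Real.one_le_exp_iff]; nlinarith
  have hIg : ∫ r in t..(0:ℝ), g r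
      = (Lf * Cf * Real.exp (-a * t)) * ((1 - Real.exp (a * t)) / a)
        + (Lf * M * Real.exp (-a * t)) * ((1 - Real.exp ((a - γ) * t)) / (a - γ)) := by
    have heq : ∀ r : ℝ, g r = (Lf * Cf * Real.exp (-a * t)) * Real.exp (a * r)
        + (Lf * M * Real.exp (-a * t)) * Real.exp ((a - γ) * r) := by
      intro r
      rw [hg]
      simp only
      rw [show (-a * (t - r)) = -a * t + a * r by ring, Real.exp_add,
        show ((a - γ) * r) = a * r + -(γ * r) by ring, Real.exp_add]
      ring
    rw [intervalIntegral.integral_congr (g := fun r =>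
        (Lf * Cf * Real.exp (-a * t)) * Real.exp (a * r)
        + (Lf * M * Real.exp (-a * t)) * Real.exp ((a - γ) * r)) (fun r _ => heq r)]
    have hce : ∀ c : ℝ, Continuous fun x : ℝ => Real.exp (c * x) := fun c =>
      Real.continuous_exp.comp (continuous_const.mul continuous_id)
    rw [intervalIntegral.integral_add
        (f := fun x => Lf * Cf * Real.exp (-a * t) * Real.exp (a * x))
        (g := fun x => Lf * M * Real.exp (-a * t) * Real.exp ((a - γ) * x))
        ((continuous_const.mul (hce a)).intervalIntegrable _ _)
        ((continuous_const.mul (hce (a - γ))).intervalIntegrable _ _),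
      intervalIntegral.integral_const_mul, intervalIntegral.integral_const_mul,
      my_integral_exp_mul ha0.ne', my_integral_exp_mul (by linarith : a - γ ≠ 0)]
    norm_num
  have hVnn : 0 ≤ ∫ r in t..(0:ℝ), g r := by
    rw [hIg]
    have h1 : 0 ≤ (1 - Real.exp (a * t)) / a := by
      apply div_nonneg (by linarith) ha0.le
    have h2 : 0 ≤ (1 - Real.exp ((a - γ) * t)) / (a - γ) := by
      rw [div_nonneg_iff]
      right
      constructor <;> linarith
    have e1 : (0:ℝ) ≤ Lf * Cf * Real.exp (-a * t) :=
      mul_nonneg (mul_nonneg hLf hCf) (Real.exp_pos _).le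
    have e2 : (0:ℝ) ≤ Lf * M * Real.exp (-a * t) :=
      mul_nonneg (mul_nonneg hLf hM) (Real.exp_pos _).le
    nlinarith
  have hnormI : ‖∫ s in (0:ℝ)..t, NormedSpace.exp ((ε * (t - s)) • Ac) (F s)‖
      ≤ ∫ r in t..(0:ℝ), g r := by
    rw [intervalIntegral.integral_symm, norm_neg]
    refine le_trans (intervalIntegral.norm_integral_le_of_norm_le ht ?_
      (hgc.intervalIntegrable _ _)) le_rfl
    filter_upwards with r hr
    exact hptwise r (by rw [Set.uIoc_of_le ht]; exact hr)
  have htri : ‖NormedSpace.exp ((ε * t) • Ac) u₀ +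
        ε • ∫ s in (0:ℝ)..t, NormedSpace.exp ((ε * (t - s)) • Ac) (F s)‖
      ≤ Real.exp (-γA' * (ε * t)) * ‖u₀‖ + ε * ∫ r in t..(0:ℝ), g r := by
    refine le_trans (norm_add_le _ _) (add_le_add (hA _ (by nlinarith) _) ?_)
    rw [norm_smul, Real.norm_of_nonneg hε.le]
    exact mul_le_mul_of_nonneg_left hnormI hε.le
  have hfirst : Real.exp (γ * t) * (Real.exp (-γA' * (ε * t)) * ‖u₀‖) ≤ ‖u₀‖ := by
    rw [← mul_assoc, ← Real.exp_add]
    have : Real.exp (γ * t + -γA' * (ε * t)) ≤ 1 := Real.exp_le_one_iff.mpr (by nlinarith)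
    nlinarith [norm_nonneg u₀, Real.exp_pos (γ * t + -γA' * (ε * t))]
  have hmain : Real.exp (γ * t) * (ε * ∫ r in t..(0:ℝ), g r)
      ≤ Lf * Cf / γA' + ε * Lf / (γ - a) * M := by
    rw [hIg]
    set X := Real.exp (a * t) with hX
    set Y := Real.exp ((γ - a) * t) with hY
    have hXpos : 0 < X := Real.exp_pos _
    have hYpos : 0 < Y := Real.exp_pos _
    have hY1 : Y ≤ 1 := Real.exp_le_one_iff.mpr (by nlinarith)
    have hXY : Real.exp (γ * t) = X * Y := by
      rw [hX, hY, ← Real.exp_add]; ring_nf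
    have hXinv : Real.exp (-a * t) * X = 1 := by
      rw [hX, ← Real.exp_add]; simp
    have hZY : Real.exp ((a - γ) * t) * Y = 1 := by
      rw [hY, ← Real.exp_add, show (a - γ) * t + (γ - a) * t = 0 by ring, Real.exp_zero]
    have hW : Real.exp (-a * t) = X⁻¹ := by
      rw [show -a * t = -(a * t) by ring, Real.exp_neg]
    have hZ' : Real.exp ((a - γ) * t) = Y⁻¹ := by
      rw [show (a - γ) * t = -((γ - a) * t) by ring, Real.exp_neg, hY]
    rw [hXY]
    clear_value X Y
    have hId : (X * Y) * (ε * ((Lf * Cf * Real.exp (-a * t)) * ((1 - X) / a)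
        + (Lf * M * Real.exp (-a * t)) * ((1 - Real.exp ((a - γ) * t)) / (a - γ))))
        = ε * Lf * Cf * (Y * (1 - X)) / a + ε * Lf * M * (1 - Y) / (γ - a) := by
      rw [hW, hZ']
      field_simp [hXpos.ne', hYpos.ne', ha0.ne', sub_ne_zero.mpr hag.ne,
        sub_ne_zero.mpr hag.ne']
      ring
    rw [hId]
    have hx1 : X ≤ 1 := hX1
    have hb1 : ε * Lf * Cf * (Y * (1 - X)) / a ≤ Lf * Cf / γA' := by
      have h1 : Y * (1 - X) ≤ 1 := by nlinarith
      have hnn : 0 ≤ ε * Lf * Cf := mul_nonneg (mul_nonneg hε.le hLf) hCf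
      have h2 : ε * Lf * Cf * (Y * (1 - X)) / a ≤ ε * Lf * Cf * 1 / a := by
        rw [div_eq_mul_inv, div_eq_mul_inv]
        exact mul_le_mul_of_nonneg_right (mul_le_mul_of_nonneg_left h1 hnn)
          (inv_nonneg.mpr ha0.le)
      have h3 : ε * Lf * Cf * 1 / a = Lf * Cf / γA' := by
        rw [ha, mul_one]
        rw [div_eq_div_iff (by positivity) (by positivity)]
        ring
      linarith
    have hb2 : ε * Lf * M * (1 - Y) / (γ - a) ≤ ε * Lf / (γ - a) * M := by
      have h1 : (1 - Y) ≤ 1 := by nlinarith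
      have hnn : 0 ≤ ε * Lf * M := mul_nonneg (mul_nonneg hε.le hLf) hM
      have h2 : ε * Lf * M * (1 - Y) / (γ - a) ≤ ε * Lf * M * 1 / (γ - a) := by
        rw [div_eq_mul_inv, div_eq_mul_inv]
        exact mul_le_mul_of_nonneg_right (mul_le_mul_of_nonneg_left h1 hnn)
          (inv_nonneg.mpr (by linarith))
      have h3 : ε * Lf * M * 1 / (γ - a) = ε * Lf / (γ - a) * M := by ring
      linarith
    linarith
  calc Real.exp (γ * t) * ‖_ + _‖ ≤ Real.exp (γ * t) * (Real.exp (-γA' * (ε * t)) * ‖u₀‖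
        + ε * ∫ r in t..(0:ℝ), g r) :=
        mul_le_mul_of_nonneg_left htri (Real.exp_pos _).le
    _ ≤ ‖u₀‖ + Lf * Cf / γA' + ε * Lf / (γ - a) * M := by
        rw [mul_add]
        linarith [hfirst, hmain]

/-! ### Continuity lemmas -/

lemma KA_cont {n : ℕ} (Ac : Vec n →L[ℝ] Vec n) (ε : ℝ) (u₀ : Vec n) {F : ℝ → Vec n}
    (hFc : Continuous F) :
    Continuous fun t => NormedSpace.exp ((ε * t) • Ac) u₀ +
      ε • ∫ s in (0:ℝ)..t, NormedSpace.exp ((ε * (t - s)) • Ac) (F s) := by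
  letI : NormedAlgebra ℚ (Vec n →L[ℝ] Vec n) := .restrictScalars ℚ ℝ _
  apply Continuous.add
  · exact (NormedSpace.exp_continuous.comp
      ((continuous_const.mul continuous_id).smul continuous_const)).clm_apply continuous_const
  · refine (?_ : Continuous fun t => ∫ s in (0:ℝ)..t,
      NormedSpace.exp ((ε * (t - s)) • Ac) (F s)).const_smul ε
    apply intervalIntegral.continuous_parametric_intervalIntegral_of_continuous
      (μ := volume) ?_ continuous_id
    exact (NormedSpace.exp_continuous.comp
        ((continuous_const.mul (continuous_fst.sub continuous_snd)).smul
          continuous_const)).clm_apply (hFc.comp continuous_snd)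

lemma KB_cont {n : ℕ} (Bc : Vec n →L[ℝ] Vec n) {G : ℝ → Vec n} (hGc : Continuous G)
    (hHint : IntegrableOn (fun r => NormedSpace.exp ((0 - r) • Bc) (G r)) (Iic 0)) :
    ContinuousOn (fun t => ∫ r in Iic t, NormedSpace.exp ((t - r) • Bc) (G r)) (Iic 0) := by
  letI : NormedAlgebra ℚ (Vec n →L[ℝ] Vec n) := .restrictScalars ℚ ℝ _
  set H : ℝ → Vec n := fun r => NormedSpace.exp ((0 - r) • Bc) (G r) with hH
  have hHc : Continuous H := (NormedSpace.exp_continuous.comp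
    ((continuous_const.sub continuous_id).smul continuous_const)).clm_apply hGc
  have hmodel : Continuous fun t => NormedSpace.exp (t • Bc)
      ((∫ r in Iic (0:ℝ), H r) - ∫ r in t..(0:ℝ), H r) := by
    have h1 : Continuous fun t : ℝ => ∫ r in t..(0:ℝ), H r := by
      have : Continuous fun t : ℝ => ∫ r in (0:ℝ)..t, H r :=
        intervalIntegral.continuous_primitive (fun a b => hHc.intervalIntegrable a b) 0
      have heq : ∀ t : ℝ, ∫ r in t..(0:ℝ), H r = -∫ r in (0:ℝ)..t, H r := fun t =>
        intervalIntegral.integral_symm _ _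
      simp only [heq]
      exact this.neg
    exact (NormedSpace.exp_continuous.comp
      (continuous_id.smul continuous_const)).clm_apply (continuous_const.sub h1)
  apply hmodel.continuousOn.congr
  intro t ht
  simp only [mem_Iic] at ht
  have hintt : IntegrableOn H (Iic t) := hHint.mono_set (Iic_subset_Iic.mpr ht)
  have key : ∀ r : ℝ, NormedSpace.exp ((t - r) • Bc) (G r)
      = NormedSpace.exp (t • Bc) (H r) := by
    intro r
    rw [hH]
    simp only
    rw [show t - r = t + (0 - r) by ring, expL_add, ContinuousLinearMap.mul_apply]
  calc (fun t => ∫ r in Iic t, NormedSpace.exp ((t - r) • Bc) (G r)) t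
      = ∫ r in Iic t, NormedSpace.exp (t • Bc) (H r) := by
        simp only
        exact setIntegral_congr_fun measurableSet_Iic fun r _ => key r
    _ = NormedSpace.exp (t • Bc) (∫ r in Iic t, H r) :=
        ContinuousLinearMap.integral_comp_comm _ hintt
    _ = NormedSpace.exp (t • Bc) ((∫ r in Iic (0:ℝ), H r) - ∫ r in t..(0:ℝ), H r) := by
        congr 1
        rw [← intervalIntegral.integral_Iic_sub_Iic hintt hHint]
        abel

/-! ### Main theorem -/

/-- the Lyapunov–Perron map `K^ε` maps `C_γ^-` into itself, with norm bound
`‖K^ε(Φ)‖_γ^- ≤ C₀ + ρ(ε) ‖Φ‖_γ^-`. -/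
theorem statement2
    (n : ℕ) (hn : 0 < n)
    (A B : Matrix (Fin n) (Fin n) ℝ) (γA' γB : ℝ) (hγA' : 0 < γA') (hγB : 0 < γB)
    (hA : ∀ t ≤ (0:ℝ), ∀ x : Vec n, ‖mApply (expM A t) x‖ ≤ Real.exp (-γA' * t) * ‖x‖)
    (hB : ∀ t ≥ (0:ℝ), ∀ y : Vec n, ‖mApply (expM B t) y‖ ≤ Real.exp (-γB * t) * ‖y‖)
    (γ ε : ℝ) (hγ : 0 < γ) (hγγB : γ < γB) (hε : 0 < ε) (hεγ : ε * γA' < γ)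
    (f g : Vec n → Vec n → Vec n) (Lf Lg Cf Cg : ℝ)
    (hLf : 0 < Lf) (hLg : 0 < Lg) (hCf : 0 < Cf) (hCg : 0 < Cg)
    (hfLip : ∀ x₁ y₁ x₂ y₂ : Vec n,
      ‖f x₁ y₁ - f x₂ y₂‖ ≤ Lf * (‖x₁ - x₂‖ + ‖y₁ - y₂‖))
    (hgLip : ∀ x₁ y₁ x₂ y₂ : Vec n,
      ‖g x₁ y₁ - g x₂ y₂‖ ≤ Lg * (‖x₁ - x₂‖ + ‖y₁ - y₂‖))
    (hfGrow : ∀ x y : Vec n, ‖f x y‖ ≤ Lf * (Cf + ‖x‖ + ‖y‖))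
    (hgGrow : ∀ x y : Vec n, ‖g x y‖ ≤ Lg * (Cg + ‖x‖ + ‖y‖))
    (η ξ : ℝ → Vec n) (hη : memCneg γ η) (hξ : memCneg γ ξ)
    (u₀ : Vec n) (u v : ℝ → Vec n) (hu : memCneg γ u) (hv : memCneg γ v) :
    memCneg γ (KA A ε u₀ f η ξ u v) ∧ memCneg γ (KB B g η ξ u v) ∧
      ∀ t ≤ (0:ℝ), ∀ s ≤ (0:ℝ),
        Real.exp (γ * t) * ‖KA A ε u₀ f η ξ u v t‖ +
            Real.exp (γ * s) * ‖KB B g η ξ u v s‖ ≤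
          (‖u₀‖ + Lf * Cf / γA' + Lg * Cg / γB +
              (ε * Lf / (γ - ε * γA') + Lg / (γB - γ)) * (cNorm γ η + cNorm γ ξ)) +
            (ε * Lf / (γ - ε * γA') + Lg / (γB - γ)) * (cNorm γ u + cNorm γ v) := by
  set Ac := Matrix.toEuclideanCLM (𝕜 := ℝ) A with hAc
  set Bc := Matrix.toEuclideanCLM (𝕜 := ℝ) B with hBc
  have hA' : ∀ τ ≤ (0:ℝ), ∀ x : Vec n,
      ‖NormedSpace.exp (τ • Ac) x‖ ≤ Real.exp (-γA' * τ) * ‖x‖ := by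
    intro τ hτ x
    have := hA τ hτ x
    rwa [mApply_eq_clm, toCLM_expM] at this
  have hB' : ∀ τ ≥ (0:ℝ), ∀ y : Vec n,
      ‖NormedSpace.exp (τ • Bc) y‖ ≤ Real.exp (-γB * τ) * ‖y‖ := by
    intro τ hτ y
    have := hB τ hτ y
    rwa [mApply_eq_clm, toCLM_expM] at this
  -- the min-truncated data
  set ut : ℝ → Vec n := fun s => u (min s 0) with hut
  set vt : ℝ → Vec n := fun s => v (min s 0) with hvt
  set ηt : ℝ → Vec n := fun s => η (min s 0) with hηt
  set ξt : ℝ → Vec n := fun s => ξ (min s 0) with hξt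
  set Ft : ℝ → Vec n := fun s => f (ut s + ηt s) (vt s + ξt s) with hFt
  set Gt : ℝ → Vec n := fun s => g (ut s + ηt s) (vt s + ξt s) with hGt
  have hFtc : Continuous Ft := (lip_continuous hLf.le hfLip).comp
    (((tilde_cont hu.1).add (tilde_cont hη.1)).prodMk
      ((tilde_cont hv.1).add (tilde_cont hξ.1)))
  have hGtc : Continuous Gt := (lip_continuous hLg.le hgLip).comp
    (((tilde_cont hu.1).add (tilde_cont hη.1)).prodMk
      ((tilde_cont hv.1).add (tilde_cont hξ.1)))
  set M : ℝ := (cNorm γ η + cNorm γ ξ) + (cNorm γ u + cNorm γ v) with hMdef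
  have hM : 0 ≤ M := by
    have := cNorm_nonneg hη; have := cNorm_nonneg hξ
    have := cNorm_nonneg hu; have := cNorm_nonneg hv
    rw [hMdef]; linarith
  have hsum : ∀ s ≤ (0:ℝ), ‖u s + η s‖ + ‖v s + ξ s‖ ≤ Real.exp (-(γ * s)) * M := by
    intro s hs
    have h1 := norm_le_cNorm hu hs
    have h2 := norm_le_cNorm hη hs
    have h3 := norm_le_cNorm hv hs
    have h4 := norm_le_cNorm hξ hs
    have e1 := norm_add_le (u s) (η s)
    have e2 := norm_add_le (v s) (ξ s)
    have : Real.exp (-(γ * s)) * M = Real.exp (-(γ * s)) * cNorm γ u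
        + Real.exp (-(γ * s)) * cNorm γ η + Real.exp (-(γ * s)) * cNorm γ v
        + Real.exp (-(γ * s)) * cNorm γ ξ := by rw [hMdef]; ring
    linarith
  have hFbound : ∀ s ≤ (0:ℝ), ‖Ft s‖ ≤ Lf * (Cf + Real.exp (-(γ * s)) * M) := by
    intro s hs
    have hmin : min s 0 = s := min_eq_left hs
    have : Ft s = f (u s + η s) (v s + ξ s) := by rw [hFt]; simp only [hut, hηt, hvt, hξt, hmin]
    rw [this]
    refine le_trans (hfGrow _ _) ?_
    have := hsum s hs
    nlinarith [hLf.le]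
  have hGbound : ∀ s ≤ (0:ℝ), ‖Gt s‖ ≤ Lg * (Cg + Real.exp (-(γ * s)) * M) := by
    intro s hs
    have hmin : min s 0 = s := min_eq_left hs
    have : Gt s = g (u s + η s) (v s + ξ s) := by rw [hGt]; simp only [hut, hηt, hvt, hξt, hmin]
    rw [this]
    refine le_trans (hgGrow _ _) ?_
    have := hsum s hs
    nlinarith [hLg.le]
  -- rewriting KA and KB in continuous-linear-map form
  have hKAeq : ∀ t ≤ (0:ℝ), KA A ε u₀ f η ξ u v t
      = NormedSpace.exp ((ε * t) • Ac) u₀ +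
          ε • ∫ s in (0:ℝ)..t, NormedSpace.exp ((ε * (t - s)) • Ac) (Ft s) := by
    intro t ht
    rw [KA, mApply_eq_clm, toCLM_expM]
    congr 2
    apply intervalIntegral.integral_congr
    intro s hs
    rw [Set.uIcc_of_ge ht] at hs
    have hs0 : s ≤ 0 := hs.2
    have hmin : min s 0 = s := min_eq_left hs0
    beta_reduce
    rw [mApply_eq_clm, toCLM_expM, hFt]
    simp only [hut, hηt, hvt, hξt, hmin]
    rfl
  have hKBeq : ∀ s ≤ (0:ℝ), KB B g η ξ u v s
      = ∫ r in Iic s, NormedSpace.exp ((s - r) • Bc) (Gt r) := by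
    intro s hs
    rw [KB]
    apply setIntegral_congr_fun measurableSet_Iic
    intro r hr
    have hr0 : r ≤ 0 := le_trans hr hs
    have hmin : min r 0 = r := min_eq_left hr0
    beta_reduce
    rw [mApply_eq_clm, toCLM_expM, hGt]
    simp only [hut, hηt, hvt, hξt, hmin]
    rfl
  -- the two pointwise bounds
  have hKAbd : ∀ t ≤ (0:ℝ), Real.exp (γ * t) * ‖KA A ε u₀ f η ξ u v t‖
      ≤ ‖u₀‖ + Lf * Cf / γA' + ε * Lf / (γ - ε * γA') * M := by
    intro t ht
    rw [hKAeq t ht]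
    exact KA_bound Ac u₀ hA' hγA' hε hεγ hLf.le hCf.le hM hFbound ht
  have hKBbd : ∀ s ≤ (0:ℝ), Real.exp (γ * s) * ‖KB B g η ξ u v s‖
      ≤ Lg * Cg / γB + Lg / (γB - γ) * M := by
    intro s hs
    rw [hKBeq s hs]
    exact KB_bound Bc hB' hγ hγγB hLg.le hCg.le hM hGbound hs
  refine ⟨⟨?_, ?_⟩, ⟨?_, ?_⟩, ?_⟩
  · exact (KA_cont Ac ε u₀ hFtc).continuousOn.congr (fun t ht => hKAeq t ht)
  · refine ⟨‖u₀‖ + Lf * Cf / γA' + ε * Lf / (γ - ε * γA') * M, ?_⟩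
    rintro x ⟨t, ht, rfl⟩
    exact hKAbd t ht
  · refine (KB_cont Bc hGtc ?_).congr (fun s hs => hKBeq s hs)
    exact KB_integrableOn Bc hB' hγ hγγB hGtc hGbound le_rfl
  · refine ⟨Lg * Cg / γB + Lg / (γB - γ) * M, ?_⟩
    rintro x ⟨s, hs, rfl⟩
    exact hKBbd s hs
  · intro t ht s hs
    have h1 := hKAbd t ht
    have h2 := hKBbd s hs
    have key : (ε * Lf / (γ - ε * γA') + Lg / (γB - γ)) * (cNorm γ η + cNorm γ ξ)
        + (ε * Lf / (γ - ε * γA') + Lg / (γB - γ)) * (cNorm γ u + cNorm γ v)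
        = ε * Lf / (γ - ε * γA') * M + Lg / (γB - γ) * M := by
      rw [hMdef]; ring
    linarith
end
end

section
/- Fix u₀ ∈ ℝ^n and let K^ε = (K_A^ε, K_B^ε) be the Lyapunov–Perron map and ρ(ε) := εL_f/(γ − εγ_A') + L_g/(γ_B − γ). Then for all Φ₁, Φ₂ ∈ C_γ^− one has ‖K^ε(Φ₁) − K^ε(Φ₂)‖_γ^− ≤ ρ(ε)·‖Φ₁ − Φ₂‖_γ^−; in particular, if ρ(ε) < 1 then K^ε is a contraction on C_γ^−. -/
open MeasureTheory Set Filter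

noncomputable section

open scoped Matrix.Norms.L2Operator

namespace LPaux

variable {n : ℕ}

noncomputable def eCLM (A : Matrix (Fin n) (Fin n) ℝ) (r : ℝ) : Vec n →L[ℝ] Vec n :=
  NormedSpace.exp (r • Matrix.toEuclideanCLM (𝕜 := ℝ) A)

lemma contCLM : Continuous (⇑(Matrix.toEuclideanCLM (𝕜 := ℝ) (n := Fin n))) :=
  LinearMap.continuous_of_finiteDimensional
    ((Matrix.toEuclideanCLM (𝕜 := ℝ) (n := Fin n)).toAlgEquiv.toLinearMap)

lemma mApply_eq (A : Matrix (Fin n) (Fin n) ℝ) (r : ℝ) (x : Vec n) :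
    mApply (expM A r) x = eCLM A r x := by
  have h : Matrix.toEuclideanCLM (𝕜 := ℝ) (expM A r) = eCLM A r := by
    rw [expM, eCLM, ← _root_.map_smul]
    exact NormedSpace.map_exp_of_mem_ball (𝕂 := ℝ) (Matrix.toEuclideanCLM (𝕜 := ℝ) (n := Fin n)) contCLM _
      ((NormedSpace.expSeries_radius_eq_top ℝ (Matrix (Fin n) (Fin n) ℝ)).symm ▸ edist_lt_top _ _)
  rw [← h]; rfl

lemma eCLM_cont (A : Matrix (Fin n) (Fin n) ℝ) : Continuous (fun r => eCLM A r) :=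
  let +nondep : NormedAlgebra ℚ (Vec n →L[ℝ] Vec n) := .restrictScalars ℚ ℝ _
  NormedSpace.exp_continuous.comp (continuous_id.smul continuous_const)

lemma cont_of_lip {f : Vec n → Vec n → Vec n} {L : ℝ} (hL : 0 < L)
    (h : ∀ x₁ y₁ x₂ y₂ : Vec n, ‖f x₁ y₁ - f x₂ y₂‖ ≤ L * (‖x₁ - x₂‖ + ‖y₁ - y₂‖)) :
    Continuous (fun p : Vec n × Vec n => f p.1 p.2) := by
  refine (LipschitzWith.of_dist_le_mul (K := (2*L).toNNReal) fun p q => ?_).continuous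
  have h2 : dist p.1 q.1 ≤ dist p q := le_max_left _ _
  have h3 : dist p.2 q.2 ≤ dist p q := le_max_right _ _
  simp only [dist_eq_norm] at h2 h3 ⊢
  rw [Real.coe_toNNReal _ (by positivity)]
  nlinarith [h p.1 p.2 q.1 q.2, norm_nonneg (p.1 - q.1), norm_nonneg (p.2 - q.2),
    norm_nonneg (p - q)]

open intervalIntegral in
lemma exp_interval (b : ℝ) (hb : b ≠ 0) (y c : ℝ) :
    ∫ r in y..c, Real.exp (b * r) = (Real.exp (b * c) - Real.exp (b * y)) / b := by
  rw [show (fun r => Real.exp (b * r)) = fun r => Real.exp (b * r) from rfl]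
  rw [intervalIntegral.integral_comp_mul_left (c := b) Real.exp hb]
  rw [integral_exp, smul_eq_mul]
  ring

lemma exp_integrableOn (b s : ℝ) (hb : 0 < b) :
    IntegrableOn (fun r => Real.exp (b * r)) (Iic s) := by
  refine integrableOn_Iic_of_intervalIntegral_norm_bounded (Real.exp (b * s) / b) s
    (fun y => ((Real.continuous_exp.comp (continuous_const.mul continuous_id)).integrableOn_Ioc))
    tendsto_id (Eventually.of_forall fun y => ?_)
  simp only [id_eq, Real.norm_eq_abs, abs_of_pos (Real.exp_pos _)]
  rw [exp_interval b hb.ne']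
  exact (div_le_div_iff_of_pos_right hb).mpr (by linarith [(Real.exp_pos (b*y)).le])

lemma exp_integral_Iic (b s : ℝ) (hb : 0 < b) :
    ∫ r in Iic s, Real.exp (b * r) = Real.exp (b * s) / b := by
  refine tendsto_nhds_unique
    (intervalIntegral_tendsto_integral_Iic s (exp_integrableOn b s hb) tendsto_id) ?_
  simp_rw [exp_interval b hb.ne']
  have h1 : Tendsto (fun y : ℝ => b * y) atBot atBot := by
    exact Tendsto.const_mul_atBot hb tendsto_id
  have h2 : Tendsto (fun y : ℝ => Real.exp (b * y)) atBot (nhds 0) :=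
    Real.tendsto_exp_atBot.comp h1
  have := ((tendsto_const_nhds (x := Real.exp (b*s))).sub h2).div_const b
  simpa using this

end LPaux

namespace LPaux2
open LPaux

variable {n : ℕ}

lemma cNorm_nonneg (γ : ℝ) (u : ℝ → Vec n) : 0 ≤ cNorm γ u :=
  Real.sSup_nonneg (by rintro x ⟨t, ht, rfl⟩; positivity)

lemma le_cNorm {γ : ℝ} {u : ℝ → Vec n}
    (h : BddAbove ((fun t => Real.exp (γ * t) * ‖u t‖) '' Iic (0:ℝ))) {r : ℝ} (hr : r ≤ 0) :
    ‖u r‖ ≤ Real.exp (-(γ * r)) * cNorm γ u := by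
  have h1 : Real.exp (γ * r) * ‖u r‖ ≤ cNorm γ u :=
    le_csSup h ⟨r, hr, rfl⟩
  have h2 : ‖u r‖ = Real.exp (-(γ * r)) * (Real.exp (γ * r) * ‖u r‖) := by
    rw [← mul_assoc, ← Real.exp_add]; simp
  rw [h2]
  exact mul_le_mul_of_nonneg_left h1 (Real.exp_pos _).le

lemma bddAbove_diff {γ : ℝ} {u₁ u₂ : ℝ → Vec n}
    (h₁ : BddAbove ((fun t => Real.exp (γ * t) * ‖u₁ t‖) '' Iic (0:ℝ)))
    (h₂ : BddAbove ((fun t => Real.exp (γ * t) * ‖u₂ t‖) '' Iic (0:ℝ))) :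
    BddAbove ((fun t => Real.exp (γ * t) * ‖u₁ t - u₂ t‖) '' Iic (0:ℝ)) := by
  obtain ⟨M₁, hM₁⟩ := h₁
  obtain ⟨M₂, hM₂⟩ := h₂
  refine ⟨M₁ + M₂, ?_⟩
  rintro x ⟨r, hr, rfl⟩
  have e1 : Real.exp (γ * r) * ‖u₁ r‖ ≤ M₁ := hM₁ ⟨r, hr, rfl⟩
  have e2 : Real.exp (γ * r) * ‖u₂ r‖ ≤ M₂ := hM₂ ⟨r, hr, rfl⟩
  have e3 : ‖u₁ r - u₂ r‖ ≤ ‖u₁ r‖ + ‖u₂ r‖ := norm_sub_le _ _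
  have e4 := (Real.exp_pos (γ * r)).le
  show Real.exp (γ * r) * ‖u₁ r - u₂ r‖ ≤ M₁ + M₂
  nlinarith

/-- Bound of the norm of a `memCneg`-type function pointwise. -/
lemma norm_le_of_bdd {γ : ℝ} {u : ℝ → Vec n} {M : ℝ}
    (hM : M ∈ upperBounds ((fun t => Real.exp (γ * t) * ‖u t‖) '' Iic (0:ℝ)))
    {r : ℝ} (hr : r ≤ 0) : ‖u r‖ ≤ Real.exp (-(γ * r)) * M := by
  have h1 : Real.exp (γ * r) * ‖u r‖ ≤ M := hM ⟨r, hr, rfl⟩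
  have h2 : ‖u r‖ = Real.exp (-(γ * r)) * (Real.exp (γ * r) * ‖u r‖) := by
    rw [← mul_assoc, ← Real.exp_add]; simp
  rw [h2]
  exact mul_le_mul_of_nonneg_left h1 (Real.exp_pos _).le

end LPaux2

namespace LPaux3
open LPaux LPaux2

variable {n : ℕ}

lemma contOn_integrand {A : Matrix (Fin n) (Fin n) ℝ} {f : Vec n → Vec n → Vec n} {Lf : ℝ}
    (hLf : 0 < Lf)
    (hfLip : ∀ x₁ y₁ x₂ y₂ : Vec n, ‖f x₁ y₁ - f x₂ y₂‖ ≤ Lf * (‖x₁ - x₂‖ + ‖y₁ - y₂‖))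
    {η ξ u v : ℝ → Vec n} (hη : ContinuousOn η (Iic 0)) (hξ : ContinuousOn ξ (Iic 0))
    (hu : ContinuousOn u (Iic 0)) (hv : ContinuousOn v (Iic 0)) (c : ℝ → ℝ)
    (hc : Continuous c) {s : Set ℝ} (hs : s ⊆ Iic 0) :
    ContinuousOn (fun r => mApply (expM A (c r)) (f (u r + η r) (v r + ξ r))) s := by
  have hw : ContinuousOn (fun r => f (u r + η r) (v r + ξ r)) (Iic 0) := by
    have := (cont_of_lip hLf hfLip).comp_continuousOn
      (((hu.add hη)).prodMk ((hv.add hξ)))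
    exact this
  have hE : Continuous (fun r => eCLM A (c r)) := (eCLM_cont A).comp hc
  have := (hE.continuousOn (s := s)).clm_apply (hw.mono hs)
  exact this.congr fun r _ => mApply_eq A (c r) _

end LPaux3

namespace LPaux4
open LPaux LPaux2 LPaux3

variable {n : ℕ}

set_option maxHeartbeats 1000000 in
lemma KA_bound (A : Matrix (Fin n) (Fin n) ℝ) (γA' γ ε : ℝ)
    (hγA' : 0 < γA') (hγ : 0 < γ) (hε : 0 < ε) (hεγ : ε * γA' < γ)
    (hA : ∀ t ≤ (0:ℝ), ∀ x : Vec n, ‖mApply (expM A t) x‖ ≤ Real.exp (-γA' * t) * ‖x‖)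
    (f : Vec n → Vec n → Vec n) (Lf : ℝ) (hLf : 0 < Lf)
    (hfLip : ∀ x₁ y₁ x₂ y₂ : Vec n, ‖f x₁ y₁ - f x₂ y₂‖ ≤ Lf * (‖x₁ - x₂‖ + ‖y₁ - y₂‖))
    (η ξ : ℝ → Vec n) (hη : ContinuousOn η (Iic 0)) (hξ : ContinuousOn ξ (Iic 0))
    (u₀ : Vec n) (u₁ v₁ u₂ v₂ : ℝ → Vec n)
    (hu₁ : ContinuousOn u₁ (Iic 0)) (hv₁ : ContinuousOn v₁ (Iic 0))
    (hu₂ : ContinuousOn u₂ (Iic 0)) (hv₂ : ContinuousOn v₂ (Iic 0))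
    (Du Dv : ℝ) (hDu0 : 0 ≤ Du) (hDv0 : 0 ≤ Dv)
    (hud : ∀ r ≤ (0:ℝ), ‖u₁ r - u₂ r‖ ≤ Real.exp (-(γ * r)) * Du)
    (hvd : ∀ r ≤ (0:ℝ), ‖v₁ r - v₂ r‖ ≤ Real.exp (-(γ * r)) * Dv)
    (t : ℝ) (ht : t ≤ 0) :
    Real.exp (γ * t) * ‖KA A ε u₀ f η ξ u₁ v₁ t - KA A ε u₀ f η ξ u₂ v₂ t‖ ≤
      (ε * Lf / (γ - ε * γA')) * (Du + Dv) := by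
  have hc : 0 < γ - ε * γA' := by linarith
  set h₁ : ℝ → Vec n := fun r => mApply (expM A (ε * (t - r))) (f (u₁ r + η r) (v₁ r + ξ r))
    with hh₁
  set h₂ : ℝ → Vec n := fun r => mApply (expM A (ε * (t - r))) (f (u₂ r + η r) (v₂ r + ξ r))
    with hh₂
  have hsub : uIcc (0:ℝ) t ⊆ Iic (0:ℝ) := by
    rw [uIcc_comm, uIcc_of_le ht]; exact Icc_subset_Iic_self
  have hcont₁ : ContinuousOn h₁ (uIcc (0:ℝ) t) :=
    contOn_integrand hLf hfLip hη hξ hu₁ hv₁ _ (by continuity) hsub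
  have hcont₂ : ContinuousOn h₂ (uIcc (0:ℝ) t) :=
    contOn_integrand hLf hfLip hη hξ hu₂ hv₂ _ (by continuity) hsub
  have hi₁ : IntervalIntegrable h₁ MeasureTheory.volume 0 t := hcont₁.intervalIntegrable
  have hi₂ : IntervalIntegrable h₂ MeasureTheory.volume 0 t := hcont₂.intervalIntegrable
  have hKAdiff : KA A ε u₀ f η ξ u₁ v₁ t - KA A ε u₀ f η ξ u₂ v₂ t
      = ε • ∫ r in (0:ℝ)..t, (h₁ r - h₂ r) := by
    rw [KA, KA, intervalIntegral.integral_sub hi₁ hi₂, smul_sub]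
    abel
  -- the dominating function
  set ψ : ℝ → ℝ := fun r => (Lf * (Du + Dv) * Real.exp (-(ε * γA' * t))) *
      Real.exp ((ε * γA' - γ) * r) with hψ
  have hψcont : Continuous ψ := by continuity
  have hptw : ∀ r ∈ Set.Ioc t (0:ℝ), ‖h₁ r - h₂ r‖ ≤ ψ r := by
    intro r hr
    have hr0 : r ≤ 0 := hr.2
    have hdiff : h₁ r - h₂ r = mApply (expM A (ε * (t - r)))
        ((f (u₁ r + η r) (v₁ r + ξ r)) - (f (u₂ r + η r) (v₂ r + ξ r))) := by
      rw [hh₁, hh₂]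
      exact (map_sub (Matrix.toEuclideanLin (expM A (ε * (t - r)))) _ _).symm
    have hle1 : ‖h₁ r - h₂ r‖ ≤ Real.exp (-γA' * (ε * (t - r))) *
        ‖(f (u₁ r + η r) (v₁ r + ξ r)) - (f (u₂ r + η r) (v₂ r + ξ r))‖ := by
      rw [hdiff]
      exact hA _ (by nlinarith [hr.1]) _
    have hle2 : ‖(f (u₁ r + η r) (v₁ r + ξ r)) - (f (u₂ r + η r) (v₂ r + ξ r))‖ ≤
        Lf * (Real.exp (-(γ * r)) * (Du + Dv)) := by
      have := hfLip (u₁ r + η r) (v₁ r + ξ r) (u₂ r + η r) (v₂ r + ξ r)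
      simp only [add_sub_add_right_eq_sub] at this
      have h3 := hud r hr0
      have h4 := hvd r hr0
      calc ‖(f (u₁ r + η r) (v₁ r + ξ r)) - (f (u₂ r + η r) (v₂ r + ξ r))‖
          ≤ Lf * (‖u₁ r - u₂ r‖ + ‖v₁ r - v₂ r‖) := this
        _ ≤ Lf * (Real.exp (-(γ * r)) * (Du + Dv)) := by nlinarith
    have hexp : Real.exp (-γA' * (ε * (t - r))) * Real.exp (-(γ * r)) =
        Real.exp (-(ε * γA' * t)) * Real.exp ((ε * γA' - γ) * r) := by
      rw [← Real.exp_add, ← Real.exp_add]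
      congr 1
      ring
    calc ‖h₁ r - h₂ r‖ ≤ Real.exp (-γA' * (ε * (t - r))) *
          (Lf * (Real.exp (-(γ * r)) * (Du + Dv))) :=
        hle1.trans (mul_le_mul_of_nonneg_left hle2 (Real.exp_pos _).le)
      _ = ψ r := by
          simp only [hψ]
          linear_combination (Lf * (Du + Dv)) * hexp
  have hae : ∀ᵐ r ∂(MeasureTheory.volume.restrict (Set.uIoc t 0)), ‖h₁ r - h₂ r‖ ≤ ψ r := by
    rw [Set.uIoc_of_le ht]
    exact (MeasureTheory.ae_restrict_mem measurableSet_Ioc).mono hptw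
  have hψint : IntervalIntegrable ψ MeasureTheory.volume t 0 := hψcont.intervalIntegrable _ _
  have hval : (∫ r in t..(0:ℝ), ψ r) = (Lf * (Du + Dv) * Real.exp (-(ε * γA' * t))) *
      ((Real.exp ((ε * γA' - γ) * t) - 1) / (γ - ε * γA')) := by
    rw [hψ]
    rw [intervalIntegral.integral_const_mul]
    rw [exp_interval _ (by linarith : ε * γA' - γ ≠ 0)]
    rw [mul_zero, Real.exp_zero]
    congr 1
    rw [div_eq_div_iff (by linarith) (by linarith)]
    ring
  have hone : 1 ≤ Real.exp ((ε * γA' - γ) * t) := by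
    apply Real.one_le_exp
    nlinarith
  have hpos : 0 ≤ ∫ r in t..(0:ℝ), ψ r := by
    rw [hval]
    apply mul_nonneg (by positivity)
    apply div_nonneg (by linarith) hc.le
  have h2 : ‖∫ r in (0:ℝ)..t, (h₁ r - h₂ r)‖ ≤ ∫ r in t..(0:ℝ), ψ r := by
    rw [intervalIntegral.integral_symm, norm_neg]
    exact (intervalIntegral.norm_integral_le_abs_of_norm_le hae hψint).trans_eq
      (abs_of_nonneg hpos)
  rw [hKAdiff, norm_smul, Real.norm_eq_abs, abs_of_pos hε]
  have hE : Real.exp (γ * t) * Real.exp (-(ε * γA' * t)) *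
      (Real.exp ((ε * γA' - γ) * t) - 1) = 1 - Real.exp ((γ - ε * γA') * t) := by
    rw [mul_sub, ← Real.exp_add, ← Real.exp_add, mul_one]
    rw [show γ * t + -(ε * γA' * t) + (ε * γA' - γ) * t = 0 by ring, Real.exp_zero]
    rw [show γ * t + -(ε * γA' * t) = (γ - ε * γA') * t by ring]
  have hfin : Real.exp (γ * t) * (ε * ∫ r in t..(0:ℝ), ψ r) =
      (ε * Lf / (γ - ε * γA')) * (Du + Dv) * (1 - Real.exp ((γ - ε * γA') * t)) := by
    rw [hval, ← hE]
    field_simp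
  calc Real.exp (γ * t) * (ε * ‖∫ r in (0:ℝ)..t, (h₁ r - h₂ r)‖)
      ≤ Real.exp (γ * t) * (ε * ∫ r in t..(0:ℝ), ψ r) := by
        apply mul_le_mul_of_nonneg_left (mul_le_mul_of_nonneg_left h2 hε.le)
          (Real.exp_pos _).le
    _ = (ε * Lf / (γ - ε * γA')) * (Du + Dv) * (1 - Real.exp ((γ - ε * γA') * t)) := hfin
    _ ≤ (ε * Lf / (γ - ε * γA')) * (Du + Dv) * 1 := by
        apply mul_le_mul_of_nonneg_left (by linarith [Real.exp_pos ((γ - ε * γA') * t)])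
        apply mul_nonneg (div_nonneg (by positivity) hc.le) (by linarith)
    _ = (ε * Lf / (γ - ε * γA')) * (Du + Dv) := mul_one _

end LPaux4

namespace LPaux5
open LPaux LPaux2 LPaux3

variable {n : ℕ}

set_option maxHeartbeats 1000000 in
lemma KB_bound (B : Matrix (Fin n) (Fin n) ℝ) (γB γ : ℝ)
    (hγB : 0 < γB) (hγ : 0 < γ) (hγγB : γ < γB)
    (hB : ∀ t ≥ (0:ℝ), ∀ y : Vec n, ‖mApply (expM B t) y‖ ≤ Real.exp (-γB * t) * ‖y‖)
    (g : Vec n → Vec n → Vec n) (Lg Cg : ℝ) (hLg : 0 < Lg) (hCg : 0 < Cg)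
    (hgLip : ∀ x₁ y₁ x₂ y₂ : Vec n, ‖g x₁ y₁ - g x₂ y₂‖ ≤ Lg * (‖x₁ - x₂‖ + ‖y₁ - y₂‖))
    (hgGrow : ∀ x y : Vec n, ‖g x y‖ ≤ Lg * (Cg + ‖x‖ + ‖y‖))
    (η ξ : ℝ → Vec n) (Mη Mξ : ℝ)
    (hη : ContinuousOn η (Iic 0)) (hξ : ContinuousOn ξ (Iic 0))
    (hMη : ∀ r ≤ (0:ℝ), ‖η r‖ ≤ Real.exp (-(γ * r)) * Mη)
    (hMξ : ∀ r ≤ (0:ℝ), ‖ξ r‖ ≤ Real.exp (-(γ * r)) * Mξ)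
    (u₁ v₁ u₂ v₂ : ℝ → Vec n) (M₁ M₂ M₃ M₄ : ℝ)
    (hu₁ : ContinuousOn u₁ (Iic 0)) (hv₁ : ContinuousOn v₁ (Iic 0))
    (hu₂ : ContinuousOn u₂ (Iic 0)) (hv₂ : ContinuousOn v₂ (Iic 0))
    (hM₁ : ∀ r ≤ (0:ℝ), ‖u₁ r‖ ≤ Real.exp (-(γ * r)) * M₁)
    (hM₂ : ∀ r ≤ (0:ℝ), ‖v₁ r‖ ≤ Real.exp (-(γ * r)) * M₂)
    (hM₃ : ∀ r ≤ (0:ℝ), ‖u₂ r‖ ≤ Real.exp (-(γ * r)) * M₃)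
    (hM₄ : ∀ r ≤ (0:ℝ), ‖v₂ r‖ ≤ Real.exp (-(γ * r)) * M₄)
    (Du Dv : ℝ) (hDu0 : 0 ≤ Du) (hDv0 : 0 ≤ Dv)
    (hud : ∀ r ≤ (0:ℝ), ‖u₁ r - u₂ r‖ ≤ Real.exp (-(γ * r)) * Du)
    (hvd : ∀ r ≤ (0:ℝ), ‖v₁ r - v₂ r‖ ≤ Real.exp (-(γ * r)) * Dv)
    (s : ℝ) (hs : s ≤ 0) :
    Real.exp (γ * s) * ‖KB B g η ξ u₁ v₁ s - KB B g η ξ u₂ v₂ s‖ ≤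
      (Lg / (γB - γ)) * (Du + Dv) := by
  have hb : 0 < γB - γ := by linarith
  set k₁ : ℝ → Vec n := fun r => mApply (expM B (s - r)) (g (u₁ r + η r) (v₁ r + ξ r)) with hk₁
  set k₂ : ℝ → Vec n := fun r => mApply (expM B (s - r)) (g (u₂ r + η r) (v₂ r + ξ r)) with hk₂
  have hsub : Iic s ⊆ Iic (0:ℝ) := Iic_subset_Iic.mpr hs
  have hcont₁ : ContinuousOn k₁ (Iic s) :=
    contOn_integrand hLg hgLip hη hξ hu₁ hv₁ _ (by continuity) hsub
  have hcont₂ : ContinuousOn k₂ (Iic s) :=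
    contOn_integrand hLg hgLip hη hξ hu₂ hv₂ _ (by continuity) hsub
  -- integrability of k₁, k₂ via a growth bound
  have key : ∀ {u v : ℝ → Vec n} {Mu Mv : ℝ},
      (∀ r ≤ (0:ℝ), ‖u r‖ ≤ Real.exp (-(γ * r)) * Mu) →
      (∀ r ≤ (0:ℝ), ‖v r‖ ≤ Real.exp (-(γ * r)) * Mv) →
      ∀ r ∈ Iic s, ‖mApply (expM B (s - r)) (g (u r + η r) (v r + ξ r))‖ ≤
        (Lg * (Cg + Mu + Mη + Mv + Mξ) * Real.exp (-(γB * s))) * Real.exp ((γB - γ) * r) := by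
    intro u v Mu Mv hMu hMv r hr
    have hr0 : r ≤ 0 := le_trans hr hs
    have hsr : (0:ℝ) ≤ s - r := by simpa using hr
    have hexp1 : (1:ℝ) ≤ Real.exp (-(γ * r)) := Real.one_le_exp (by nlinarith)
    have h1 : ‖mApply (expM B (s - r)) (g (u r + η r) (v r + ξ r))‖ ≤
        Real.exp (-γB * (s - r)) * ‖g (u r + η r) (v r + ξ r)‖ := hB _ hsr _
    have h2 : ‖g (u r + η r) (v r + ξ r)‖ ≤
        Lg * (Cg + ‖u r + η r‖ + ‖v r + ξ r‖) := hgGrow _ _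
    have h3 : ‖u r + η r‖ ≤ Real.exp (-(γ * r)) * (Mu + Mη) := by
      calc ‖u r + η r‖ ≤ ‖u r‖ + ‖η r‖ := norm_add_le _ _
        _ ≤ Real.exp (-(γ * r)) * (Mu + Mη) := by
            have := hMu r hr0; have := hMη r hr0; linarith [mul_add (Real.exp (-(γ * r))) Mu Mη]
    have h4 : ‖v r + ξ r‖ ≤ Real.exp (-(γ * r)) * (Mv + Mξ) := by
      calc ‖v r + ξ r‖ ≤ ‖v r‖ + ‖ξ r‖ := norm_add_le _ _
        _ ≤ Real.exp (-(γ * r)) * (Mv + Mξ) := by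
            have := hMv r hr0; have := hMξ r hr0; linarith [mul_add (Real.exp (-(γ * r))) Mv Mξ]
    have h5 : Cg + ‖u r + η r‖ + ‖v r + ξ r‖ ≤
        Real.exp (-(γ * r)) * (Cg + Mu + Mη + Mv + Mξ) := by nlinarith [norm_nonneg (u r + η r)]
    have h6 : ‖g (u r + η r) (v r + ξ r)‖ ≤
        Lg * (Real.exp (-(γ * r)) * (Cg + Mu + Mη + Mv + Mξ)) :=
      h2.trans (by nlinarith)
    have hexp : Real.exp (-γB * (s - r)) * Real.exp (-(γ * r)) =
        Real.exp (-(γB * s)) * Real.exp ((γB - γ) * r) := by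
      rw [← Real.exp_add, ← Real.exp_add]; congr 1; ring
    calc ‖mApply (expM B (s - r)) (g (u r + η r) (v r + ξ r))‖
        ≤ Real.exp (-γB * (s - r)) * (Lg * (Real.exp (-(γ * r)) * (Cg + Mu + Mη + Mv + Mξ))) :=
          h1.trans (mul_le_mul_of_nonneg_left h6 (Real.exp_pos _).le)
      _ = (Lg * (Cg + Mu + Mη + Mv + Mξ) * Real.exp (-(γB * s))) * Real.exp ((γB - γ) * r) := by
          linear_combination Lg * (Cg + Mu + Mη + Mv + Mξ) * hexp
  have hintexp : ∀ C : ℝ, IntegrableOn (fun r => C * Real.exp ((γB - γ) * r)) (Iic s) :=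
    fun C => (exp_integrableOn (γB - γ) s hb).const_mul C
  have hk₁int : IntegrableOn k₁ (Iic s) := by
    refine MeasureTheory.Integrable.mono' (hintexp (Lg * (Cg + M₁ + Mη + M₂ + Mξ) *
      Real.exp (-(γB * s)))) (hcont₁.aestronglyMeasurable measurableSet_Iic) ?_
    exact (MeasureTheory.ae_restrict_mem measurableSet_Iic).mono fun r hr => by
      simpa [mul_assoc] using key hM₁ hM₂ r hr
  have hk₂int : IntegrableOn k₂ (Iic s) := by
    refine MeasureTheory.Integrable.mono' (hintexp (Lg * (Cg + M₃ + Mη + M₄ + Mξ) *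
      Real.exp (-(γB * s)))) (hcont₂.aestronglyMeasurable measurableSet_Iic) ?_
    exact (MeasureTheory.ae_restrict_mem measurableSet_Iic).mono fun r hr => by
      simpa [mul_assoc] using key hM₃ hM₄ r hr
  have hKBdiff : KB B g η ξ u₁ v₁ s - KB B g η ξ u₂ v₂ s = ∫ r in Iic s, (k₁ r - k₂ r) := by
    rw [KB, KB, MeasureTheory.integral_sub hk₁int hk₂int]
  -- pointwise bound on the difference
  set ψ : ℝ → ℝ := fun r => (Lg * (Du + Dv) * Real.exp (-(γB * s))) * Real.exp ((γB - γ) * r)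
    with hψ
  have hψint : IntegrableOn ψ (Iic s) := hintexp _
  have hptw : ∀ r ∈ Iic s, ‖k₁ r - k₂ r‖ ≤ ψ r := by
    intro r hr
    have hr0 : r ≤ 0 := le_trans hr hs
    have hsr : (0:ℝ) ≤ s - r := by simpa using hr
    have hdiff : k₁ r - k₂ r = mApply (expM B (s - r))
        ((g (u₁ r + η r) (v₁ r + ξ r)) - (g (u₂ r + η r) (v₂ r + ξ r))) := by
      rw [hk₁, hk₂]
      exact (map_sub (Matrix.toEuclideanLin (expM B (s - r))) _ _).symm
    have hle1 : ‖k₁ r - k₂ r‖ ≤ Real.exp (-γB * (s - r)) *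
        ‖(g (u₁ r + η r) (v₁ r + ξ r)) - (g (u₂ r + η r) (v₂ r + ξ r))‖ := by
      rw [hdiff]; exact hB _ hsr _
    have hle2 : ‖(g (u₁ r + η r) (v₁ r + ξ r)) - (g (u₂ r + η r) (v₂ r + ξ r))‖ ≤
        Lg * (Real.exp (-(γ * r)) * (Du + Dv)) := by
      have := hgLip (u₁ r + η r) (v₁ r + ξ r) (u₂ r + η r) (v₂ r + ξ r)
      simp only [add_sub_add_right_eq_sub] at this
      have h3 := hud r hr0
      have h4 := hvd r hr0
      exact this.trans (by nlinarith)
    have hexp : Real.exp (-γB * (s - r)) * Real.exp (-(γ * r)) =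
        Real.exp (-(γB * s)) * Real.exp ((γB - γ) * r) := by
      rw [← Real.exp_add, ← Real.exp_add]; congr 1; ring
    calc ‖k₁ r - k₂ r‖ ≤ Real.exp (-γB * (s - r)) *
          (Lg * (Real.exp (-(γ * r)) * (Du + Dv))) :=
        hle1.trans (mul_le_mul_of_nonneg_left hle2 (Real.exp_pos _).le)
      _ = ψ r := by
          simp only [hψ]
          linear_combination Lg * (Du + Dv) * hexp
  have h2 : ‖∫ r in Iic s, (k₁ r - k₂ r)‖ ≤ ∫ r in Iic s, ψ r :=
    MeasureTheory.norm_integral_le_of_norm_le hψint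
      ((MeasureTheory.ae_restrict_mem measurableSet_Iic).mono hptw)
  have hval : (∫ r in Iic s, ψ r) = (Lg * (Du + Dv) * Real.exp (-(γB * s))) *
      (Real.exp ((γB - γ) * s) / (γB - γ)) := by
    simp only [hψ]
    rw [MeasureTheory.integral_const_mul, exp_integral_Iic _ _ hb]
  have hE : Real.exp (γ * s) * (Real.exp (-(γB * s)) * Real.exp ((γB - γ) * s)) = 1 := by
    rw [← Real.exp_add, ← Real.exp_add,
      show γ * s + (-(γB * s) + (γB - γ) * s) = 0 by ring, Real.exp_zero]
  calc Real.exp (γ * s) * ‖KB B g η ξ u₁ v₁ s - KB B g η ξ u₂ v₂ s‖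
      ≤ Real.exp (γ * s) * ∫ r in Iic s, ψ r := by
        rw [hKBdiff]
        exact mul_le_mul_of_nonneg_left h2 (Real.exp_pos _).le
    _ = (Lg / (γB - γ)) * (Du + Dv) := by
        rw [hval]
        field_simp
        rw [mul_comm γB s, mul_comm (γB - γ) s] at hE
        linear_combination Lg * (Du + Dv) * Real.exp (γ*s) * Real.exp (-(γB * s)) *
          Real.exp ((γB - γ) * s) * 0 + (Du + Dv) * hE

end LPaux5

/-- the Lyapunov–Perron map is `ρ(ε)`-Lipschitz on `C_γ^-`; in particular it
is a contraction when `ρ(ε) < 1`. -/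
theorem statement3
    (n : ℕ) (hn : 0 < n)
    (A B : Matrix (Fin n) (Fin n) ℝ) (γA' γB : ℝ) (hγA' : 0 < γA') (hγB : 0 < γB)
    (hA : ∀ t ≤ (0:ℝ), ∀ x : Vec n, ‖mApply (expM A t) x‖ ≤ Real.exp (-γA' * t) * ‖x‖)
    (hB : ∀ t ≥ (0:ℝ), ∀ y : Vec n, ‖mApply (expM B t) y‖ ≤ Real.exp (-γB * t) * ‖y‖)
    (γ ε : ℝ) (hγ : 0 < γ) (hγγB : γ < γB) (hε : 0 < ε) (hεγ : ε * γA' < γ)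
    (f g : Vec n → Vec n → Vec n) (Lf Lg Cf Cg : ℝ)
    (hLf : 0 < Lf) (hLg : 0 < Lg) (hCf : 0 < Cf) (hCg : 0 < Cg)
    (hfLip : ∀ x₁ y₁ x₂ y₂ : Vec n,
      ‖f x₁ y₁ - f x₂ y₂‖ ≤ Lf * (‖x₁ - x₂‖ + ‖y₁ - y₂‖))
    (hgLip : ∀ x₁ y₁ x₂ y₂ : Vec n,
      ‖g x₁ y₁ - g x₂ y₂‖ ≤ Lg * (‖x₁ - x₂‖ + ‖y₁ - y₂‖))
    (hfGrow : ∀ x y : Vec n, ‖f x y‖ ≤ Lf * (Cf + ‖x‖ + ‖y‖))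
    (hgGrow : ∀ x y : Vec n, ‖g x y‖ ≤ Lg * (Cg + ‖x‖ + ‖y‖))
    (η ξ : ℝ → Vec n) (hη : memCneg γ η) (hξ : memCneg γ ξ)
    (u₀ : Vec n)
    (u₁ v₁ u₂ v₂ : ℝ → Vec n)
    (hu₁ : memCneg γ u₁) (hv₁ : memCneg γ v₁) (hu₂ : memCneg γ u₂) (hv₂ : memCneg γ v₂) :
    ∀ t ≤ (0:ℝ), ∀ s ≤ (0:ℝ),
      Real.exp (γ * t) * ‖KA A ε u₀ f η ξ u₁ v₁ t - KA A ε u₀ f η ξ u₂ v₂ t‖ +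
          Real.exp (γ * s) * ‖KB B g η ξ u₁ v₁ s - KB B g η ξ u₂ v₂ s‖ ≤
        (ε * Lf / (γ - ε * γA') + Lg / (γB - γ)) *
          (cNorm γ (fun r => u₁ r - u₂ r) + cNorm γ (fun r => v₁ r - v₂ r)) := by
  intro t ht s hs
  have hud : ∀ r ≤ (0:ℝ), ‖u₁ r - u₂ r‖ ≤
      Real.exp (-(γ * r)) * cNorm γ (fun r => u₁ r - u₂ r) := fun r hr =>
    LPaux2.le_cNorm (LPaux2.bddAbove_diff hu₁.2 hu₂.2) hr
  have hvd : ∀ r ≤ (0:ℝ), ‖v₁ r - v₂ r‖ ≤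
      Real.exp (-(γ * r)) * cNorm γ (fun r => v₁ r - v₂ r) := fun r hr =>
    LPaux2.le_cNorm (LPaux2.bddAbove_diff hv₁.2 hv₂.2) hr
  obtain ⟨Mη, hMη'⟩ := hη.2
  obtain ⟨Mξ, hMξ'⟩ := hξ.2
  obtain ⟨M₁, hM₁'⟩ := hu₁.2
  obtain ⟨M₂, hM₂'⟩ := hv₁.2
  obtain ⟨M₃, hM₃'⟩ := hu₂.2
  obtain ⟨M₄, hM₄'⟩ := hv₂.2
  have hKA := LPaux4.KA_bound A γA' γ ε hγA' hγ hε hεγ hA f Lf hLf hfLip η ξ hη.1 hξ.1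
    u₀ u₁ v₁ u₂ v₂ hu₁.1 hv₁.1 hu₂.1 hv₂.1
    (cNorm γ (fun r => u₁ r - u₂ r)) (cNorm γ (fun r => v₁ r - v₂ r))
    (LPaux2.cNorm_nonneg _ _) (LPaux2.cNorm_nonneg _ _) hud hvd t ht
  have hKB := LPaux5.KB_bound B γB γ hγB hγ hγγB hB g Lg Cg hLg hCg hgLip hgGrow η ξ Mη Mξ
    hη.1 hξ.1 (fun r hr => LPaux2.norm_le_of_bdd hMη' hr)
    (fun r hr => LPaux2.norm_le_of_bdd hMξ' hr)
    u₁ v₁ u₂ v₂ M₁ M₂ M₃ M₄ hu₁.1 hv₁.1 hu₂.1 hv₂.1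
    (fun r hr => LPaux2.norm_le_of_bdd hM₁' hr)
    (fun r hr => LPaux2.norm_le_of_bdd hM₂' hr)
    (fun r hr => LPaux2.norm_le_of_bdd hM₃' hr)
    (fun r hr => LPaux2.norm_le_of_bdd hM₄' hr)
    (cNorm γ (fun r => u₁ r - u₂ r)) (cNorm γ (fun r => v₁ r - v₂ r))
    (LPaux2.cNorm_nonneg _ _) (LPaux2.cNorm_nonneg _ _) hud hvd s hs
  rw [add_mul]
  exact add_le_add hKA hKB
end
end

section
/- Assume ρ(ε) := εL_f/(γ − εγ_A') + L_g/(γ_B − γ) < 1, and for each u₀ ∈ ℝ^n let Φ^ε(·;u₀) be the unique fixed point in C_γ^− of the Lyapunov–Perron map with initial value u₀. Then for all u₀, u₀' ∈ ℝ^n, ‖Φ^ε(·;u₀) − Φ^ε(·;u₀')‖_γ^− ≤ |u₀ − u₀'|/(1 − ρ(ε)). -/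
open MeasureTheory Set Filter

noncomputable section

/-- `(u, v)` is a fixed point of the Lyapunov–Perron map in `C_γ^-`, with forcings
`(η, ξ)` and initial value `u₀` (the fixed-point equations are required on `(-∞, 0]`,
with the improper integral in the `B`-component converging absolutely). -/
def IsLPFixedPt {n : ℕ} (γ : ℝ) (A B : Matrix (Fin n) (Fin n) ℝ) (ε : ℝ)
    (f g : Vec n → Vec n → Vec n) (η ξ : ℝ → Vec n) (u₀ : Vec n)
    (u v : ℝ → Vec n) : Prop :=
  memCneg γ u ∧ memCneg γ v ∧
    (∀ t ≤ (0:ℝ), u t = KA A ε u₀ f η ξ u v t) ∧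
    (∀ t ≤ (0:ℝ),
      IntegrableOn (fun s => mApply (expM B (t - s)) (g (u s + η s) (v s + ξ s)))
          (Iic t) volume ∧
        v t = KB B g η ξ u v t)

section ContAux
attribute [local instance] Matrix.linftyOpNormedRing Matrix.linftyOpNormedAlgebra
lemma cont_mApply_expM {n : ℕ} (A : Matrix (Fin n) (Fin n) ℝ) :
    Continuous fun p : ℝ × Vec n => mApply (expM A p.1) p.2 := by
  have h1 : Continuous fun t : ℝ => expM A t :=
    NormedSpace.exp_continuous.comp (continuous_id.smul continuous_const)
  let L : Matrix (Fin n) (Fin n) ℝ →ₗ[ℝ] (Vec n →L[ℝ] Vec n) :=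
    { toFun := fun M => LinearMap.toContinuousLinearMap (Matrix.toEuclideanLin M)
      map_add' := by intro x y; ext v; simp
      map_smul' := by intro c x; ext v; simp }
  have h2 : Continuous L := L.continuous_of_finiteDimensional
  have h3 : Continuous fun p : ℝ × Vec n => (L (expM A p.1), p.2) :=
    ((h2.comp h1).comp continuous_fst).prodMk continuous_snd
  exact isBoundedBilinearMap_apply.continuous.comp h3
end ContAux

lemma inner_pair_contOn {n : ℕ} (ε r : ℝ) (f : Vec n → Vec n → Vec n)
    (hfc : Continuous fun p : Vec n × Vec n => f p.1 p.2) (w z η ξ : ℝ → Vec n)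
    (hw : ContinuousOn w (Iic 0)) (hz : ContinuousOn z (Iic 0))
    (hη : ContinuousOn η (Iic 0)) (hξ : ContinuousOn ξ (Iic 0)) :
    ContinuousOn (fun s : ℝ => (ε * (r - s), f (w s + η s) (z s + ξ s))) (Iic 0) := by
  refine ContinuousOn.prodMk ?_ ?_
  · exact (continuous_const.mul (continuous_const.sub continuous_id)).continuousOn
  · exact hfc.comp_continuousOn ((hw.add hη).prodMk (hz.add hξ))

lemma intervalIntegrable_exp_mul (b a c : ℝ) :
    IntervalIntegrable (fun s => Real.exp (b * s)) volume a c :=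
  (Real.continuous_exp.comp (continuous_const.mul continuous_id)).intervalIntegrable a c

lemma integral_exp_mul (b a c : ℝ) (hb : b ≠ 0) :
    ∫ s in a..c, Real.exp (b * s) = (Real.exp (b * c) - Real.exp (b * a)) / b := by
  have := intervalIntegral.integral_comp_mul_left (fun x => Real.exp x) (c := b) hb
    (a := a) (b := c)
  simp only [integral_exp] at this
  rw [this, smul_eq_mul]
  field_simp

lemma integrableOn_exp_mul_Iic' {b : ℝ} (hb : 0 < b) (t : ℝ) :
    IntegrableOn (fun s => Real.exp (b * s)) (Iic t) := by
  refine integrableOn_Iic_of_intervalIntegral_norm_bounded (Real.exp (b*t)/b) t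
    (fun y => (intervalIntegrable_exp_mul b y t).1) tendsto_id
    (Eventually.of_forall fun y => ?_)
  simp_rw [Real.norm_eq_abs, abs_of_nonneg (Real.exp_pos _).le]
  rw [integral_exp_mul b y t hb.ne']
  gcongr
  linarith [(Real.exp_pos (b*y)).le]

lemma integral_exp_mul_Iic' {b : ℝ} (hb : 0 < b) (t : ℝ) :
    ∫ s in Iic t, Real.exp (b * s) = Real.exp (b * t) / b := by
  refine tendsto_nhds_unique
    (intervalIntegral_tendsto_integral_Iic _ (integrableOn_exp_mul_Iic' hb t) tendsto_id) ?_
  have h0 : ∀ y : ℝ, ∫ s in y..t, Real.exp (b * s) = (Real.exp (b*t) - Real.exp (b*y))/b :=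
    fun y => integral_exp_mul b y t hb.ne'
  simp_rw [h0]
  have h1 : Tendsto (fun y : ℝ => Real.exp (b * y)) atBot (nhds 0) := by
    apply Real.tendsto_exp_atBot.comp
    exact (tendsto_const_mul_atBot_of_pos hb).2 tendsto_id
  have := ((tendsto_const_nhds (x := Real.exp (b*t))).sub h1).div_const b
  simpa using this


set_option maxHeartbeats 1000000 in
/-- Lipschitz dependence of the fixed point on the initial value:
`‖Φ^ε(⋅;u₀) − Φ^ε(⋅;u₀′)‖_γ^- ≤ |u₀ − u₀′| / (1 − ρ(ε))`. -/
theorem statement6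
    (n : ℕ) (hn : 0 < n)
    (A B : Matrix (Fin n) (Fin n) ℝ) (γA' γB : ℝ) (hγA' : 0 < γA') (hγB : 0 < γB)
    (hA : ∀ t ≤ (0:ℝ), ∀ x : Vec n, ‖mApply (expM A t) x‖ ≤ Real.exp (-γA' * t) * ‖x‖)
    (hB : ∀ t ≥ (0:ℝ), ∀ y : Vec n, ‖mApply (expM B t) y‖ ≤ Real.exp (-γB * t) * ‖y‖)
    (γ ε : ℝ) (hγ : 0 < γ) (hγγB : γ < γB) (hε : 0 < ε) (hεγ : ε * γA' < γ)
    (f g : Vec n → Vec n → Vec n) (Lf Lg Cf Cg : ℝ)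
    (hLf : 0 < Lf) (hLg : 0 < Lg) (hCf : 0 < Cf) (hCg : 0 < Cg)
    (hfLip : ∀ x₁ y₁ x₂ y₂ : Vec n,
      ‖f x₁ y₁ - f x₂ y₂‖ ≤ Lf * (‖x₁ - x₂‖ + ‖y₁ - y₂‖))
    (hgLip : ∀ x₁ y₁ x₂ y₂ : Vec n,
      ‖g x₁ y₁ - g x₂ y₂‖ ≤ Lg * (‖x₁ - x₂‖ + ‖y₁ - y₂‖))
    (hfGrow : ∀ x y : Vec n, ‖f x y‖ ≤ Lf * (Cf + ‖x‖ + ‖y‖))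
    (hgGrow : ∀ x y : Vec n, ‖g x y‖ ≤ Lg * (Cg + ‖x‖ + ‖y‖))
    (η ξ : ℝ → Vec n) (hη : memCneg γ η) (hξ : memCneg γ ξ)
    (hρ : ε * Lf / (γ - ε * γA') + Lg / (γB - γ) < 1)
    (u₀ u₀' : Vec n) (u v u' v' : ℝ → Vec n)
    (hfix : IsLPFixedPt γ A B ε f g η ξ u₀ u v)
    (hfix' : IsLPFixedPt γ A B ε f g η ξ u₀' u' v') :
    ∀ t ≤ (0:ℝ), ∀ s ≤ (0:ℝ),
      Real.exp (γ * t) * ‖u t - u' t‖ + Real.exp (γ * s) * ‖v s - v' s‖ ≤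
        ‖u₀ - u₀'‖ / (1 - (ε * Lf / (γ - ε * γA') + Lg / (γB - γ))) := by
  obtain ⟨⟨hucont, hubdd⟩, ⟨hvcont, hvbdd⟩, hKAu, hKBv⟩ := hfix
  obtain ⟨⟨hu'cont, hu'bdd⟩, ⟨hv'cont, hv'bdd⟩, hKAu', hKBv'⟩ := hfix'
  have hc : 0 < γ - ε * γA' := by linarith
  have hd : 0 < γB - γ := by linarith
  set Δ₀ := ‖u₀ - u₀'‖ with hΔ₀
  -- the deviation functions and their sups
  set Du : ℝ → ℝ := fun r => Real.exp (γ * r) * ‖u r - u' r‖ with hDu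
  set Dv : ℝ → ℝ := fun r => Real.exp (γ * r) * ‖v r - v' r‖ with hDv
  have hbddDu : BddAbove (Du '' Iic 0) := by
    obtain ⟨b1, hb1⟩ := hubdd
    obtain ⟨b2, hb2⟩ := hu'bdd
    refine ⟨b1 + b2, ?_⟩
    rintro x ⟨r, hr, rfl⟩
    have h1 := hb1 (mem_image_of_mem _ hr)
    have h2 := hb2 (mem_image_of_mem _ hr)
    simp only [hDu]
    have h3 := norm_sub_le (u r) (u' r)
    nlinarith [Real.exp_pos (γ * r)]
  have hbddDv : BddAbove (Dv '' Iic 0) := by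
    obtain ⟨b1, hb1⟩ := hvbdd
    obtain ⟨b2, hb2⟩ := hv'bdd
    refine ⟨b1 + b2, ?_⟩
    rintro x ⟨r, hr, rfl⟩
    have h1 := hb1 (mem_image_of_mem _ hr)
    have h2 := hb2 (mem_image_of_mem _ hr)
    simp only [hDv]
    have h3 := norm_sub_le (v r) (v' r)
    nlinarith [Real.exp_pos (γ * r)]
  set Mu := sSup (Du '' Iic 0) with hMu_def
  set Mv := sSup (Dv '' Iic 0) with hMv_def
  have hMu : ∀ r ≤ (0:ℝ), Real.exp (γ * r) * ‖u r - u' r‖ ≤ Mu :=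
    fun r hr => le_csSup hbddDu (mem_image_of_mem _ hr)
  have hMv : ∀ r ≤ (0:ℝ), Real.exp (γ * r) * ‖v r - v' r‖ ≤ Mv :=
    fun r hr => le_csSup hbddDv (mem_image_of_mem _ hr)
  have hMu0 : 0 ≤ Mu := le_trans (by positivity) (hMu 0 le_rfl)
  have hMv0 : 0 ≤ Mv := le_trans (by positivity) (hMv 0 le_rfl)
  -- pointwise bounds via the sups
  have hDu' : ∀ x ≤ (0:ℝ), ‖u x - u' x‖ ≤ Real.exp (-γ * x) * Mu := by
    intro x hx
    have h := hMu x hx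
    have he : Real.exp (-γ * x) * Real.exp (γ * x) = 1 := by
      rw [← Real.exp_add, show -γ * x + γ * x = 0 by ring, Real.exp_zero]
    calc ‖u x - u' x‖ = Real.exp (-γ * x) * (Real.exp (γ * x) * ‖u x - u' x‖) := by
          rw [← mul_assoc, he, one_mul]
      _ ≤ Real.exp (-γ * x) * Mu := mul_le_mul_of_nonneg_left h (Real.exp_pos _).le
  have hDv' : ∀ x ≤ (0:ℝ), ‖v x - v' x‖ ≤ Real.exp (-γ * x) * Mv := by
    intro x hx
    have h := hMv x hx
    have he : Real.exp (-γ * x) * Real.exp (γ * x) = 1 := by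
      rw [← Real.exp_add, show -γ * x + γ * x = 0 by ring, Real.exp_zero]
    calc ‖v x - v' x‖ = Real.exp (-γ * x) * (Real.exp (γ * x) * ‖v x - v' x‖) := by
          rw [← mul_assoc, he, one_mul]
      _ ≤ Real.exp (-γ * x) * Mv := mul_le_mul_of_nonneg_left h (Real.exp_pos _).le
  -- continuity of f as a bivariate map
  have hfc : Continuous fun p : Vec n × Vec n => f p.1 p.2 := by
    apply (LipschitzWith.of_dist_le_mul (K := (2 * Lf).toNNReal)
      (f := fun p : Vec n × Vec n => f p.1 p.2) ?_).continuous
    intro p q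
    rw [dist_eq_norm, Real.coe_toNNReal _ (by positivity)]
    have h1 := hfLip p.1 p.2 q.1 q.2
    have h2 : ‖p.1 - q.1‖ ≤ dist p q := by
      rw [← dist_eq_norm, Prod.dist_eq]; exact le_max_left _ _
    have h3 : ‖p.2 - q.2‖ ≤ dist p q := by
      rw [← dist_eq_norm, Prod.dist_eq]; exact le_max_right _ _
    calc ‖f p.1 p.2 - f q.1 q.2‖ ≤ Lf * (‖p.1 - q.1‖ + ‖p.2 - q.2‖) := h1
      _ ≤ 2 * Lf * dist p q := by nlinarith [dist_nonneg (x := p) (y := q)]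
  -- continuity of the A-integrand
  have hFcont : ∀ (r : ℝ) (w z : ℝ → Vec n), ContinuousOn w (Iic 0) → ContinuousOn z (Iic 0) →
      ContinuousOn (fun s => mApply (expM A (ε * (r - s))) (f (w s + η s) (z s + ξ s)))
        (Iic 0) := by
    intro r w z hw hz
    have h := (cont_mApply_expM A).comp_continuousOn
      (inner_pair_contOn ε r f hfc w z η ξ hw hz hη.1 hξ.1)
    exact h
  -- CLAIM 1
  have claim1 : ∀ r ≤ (0:ℝ), Real.exp (γ * r) * ‖u r - u' r‖ ≤
      Δ₀ + ε * Lf / (γ - ε * γA') * (Mu + Mv) := by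
    intro r hr
    have hsub : uIcc (0:ℝ) r ⊆ Iic 0 := by
      rw [uIcc_comm, uIcc_of_le hr]; exact Icc_subset_Iic_self
    have hI1 : IntervalIntegrable
        (fun s => mApply (expM A (ε * (r - s))) (f (u s + η s) (v s + ξ s))) volume 0 r :=
      ((hFcont r u v hucont hvcont).mono hsub).intervalIntegrable
    have hI1' : IntervalIntegrable
        (fun s => mApply (expM A (ε * (r - s))) (f (u' s + η s) (v' s + ξ s))) volume 0 r :=
      ((hFcont r u' v' hu'cont hv'cont).mono hsub).intervalIntegrable
    have hdiff : u r - u' r = mApply (expM A (ε * r)) (u₀ - u₀') +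
        ε • ∫ s in (0:ℝ)..r, mApply (expM A (ε * (r - s)))
          (f (u s + η s) (v s + ξ s) - f (u' s + η s) (v' s + ξ s)) := by
      rw [hKAu r hr, hKAu' r hr]
      unfold KA
      have h4 : (∫ s in (0:ℝ)..r, mApply (expM A (ε * (r - s)))
            (f (u s + η s) (v s + ξ s) - f (u' s + η s) (v' s + ξ s))) =
          (∫ s in (0:ℝ)..r, mApply (expM A (ε * (r - s))) (f (u s + η s) (v s + ξ s))) -
          ∫ s in (0:ℝ)..r, mApply (expM A (ε * (r - s))) (f (u' s + η s) (v' s + ξ s)) := by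
        rw [← intervalIntegral.integral_sub hI1 hI1']
        congr 1; funext s; simp [mApply, map_sub]
      have h5 : mApply (expM A (ε * r)) (u₀ - u₀') =
          mApply (expM A (ε * r)) u₀ - mApply (expM A (ε * r)) u₀' := by
        simp [mApply, map_sub]
      rw [h4, h5, smul_sub]; abel
    have hεr : ε * r ≤ 0 := mul_nonpos_iff.mpr (Or.inl ⟨hε.le, hr⟩)
    have hn1 : ‖mApply (expM A (ε * r)) (u₀ - u₀')‖ ≤ Real.exp (-γA' * (ε * r)) * Δ₀ :=
      hA _ hεr _
    -- bound on the interval integral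
    set G : ℝ → ℝ := fun s =>
      Lf * ((Mu + Mv) * (Real.exp (-γA' * (ε * (r - s))) * Real.exp (-γ * s))) with hG
    have hGc : Continuous G := by
      apply continuous_const.mul
      apply continuous_const.mul
      exact ((Real.continuous_exp.comp (by continuity)).mul
        (Real.continuous_exp.comp (by continuity)))
    have hIG : IntervalIntegrable G volume r 0 := hGc.intervalIntegrable r 0
    have hbound : ∀ᵐ x ∂(volume.restrict (Set.uIoc r 0)),
        ‖mApply (expM A (ε * (r - x)))
          (f (u x + η x) (v x + ξ x) - f (u' x + η x) (v' x + ξ x))‖ ≤ G x := by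
      rw [Set.uIoc_of_le hr]
      refine (ae_restrict_iff' measurableSet_Ioc).2 (Eventually.of_forall fun x hx => ?_)
      have hx0 : x ≤ 0 := hx.2
      have hrx : ε * (r - x) ≤ 0 := mul_nonpos_iff.mpr (Or.inl ⟨hε.le, by linarith [hx.1]⟩)
      have step1 := hA _ hrx (f (u x + η x) (v x + ξ x) - f (u' x + η x) (v' x + ξ x))
      have step2 := hfLip (u x + η x) (v x + ξ x) (u' x + η x) (v' x + ξ x)
      simp only [add_sub_add_right_eq_sub] at step2
      have h1 := hDu' x hx0
      have h2 := hDv' x hx0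
      have e1 := Real.exp_pos (-γA' * (ε * (r - x)))
      have e2 := Real.exp_pos (-γ * x)
      calc ‖mApply (expM A (ε * (r - x)))
            (f (u x + η x) (v x + ξ x) - f (u' x + η x) (v' x + ξ x))‖ ≤
            Real.exp (-γA' * (ε * (r - x))) *
              ‖f (u x + η x) (v x + ξ x) - f (u' x + η x) (v' x + ξ x)‖ := step1
        _ ≤ Real.exp (-γA' * (ε * (r - x))) * (Lf * (‖u x - u' x‖ + ‖v x - v' x‖)) :=
            mul_le_mul_of_nonneg_left step2 e1.le
        _ ≤ G x := by
            simp only [hG]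
            have key := mul_le_mul_of_nonneg_left (add_le_add h1 h2)
              (mul_nonneg e1.le hLf.le)
            linarith [key]
    have hInorm : ‖∫ s in (0:ℝ)..r, mApply (expM A (ε * (r - s)))
          (f (u s + η s) (v s + ξ s) - f (u' s + η s) (v' s + ξ s))‖ ≤
        |∫ s in r..0, G s| := by
      rw [intervalIntegral.integral_symm, norm_neg]
      exact intervalIntegral.norm_integral_le_abs_of_norm_le hbound hIG
    -- compute the integral of G
    have hbne : ε * γA' - γ ≠ 0 := by intro h; nlinarith
    have hGpt : ∀ s, G s = (Lf * ((Mu + Mv) * Real.exp (-γA' * (ε * r)))) *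
        Real.exp ((ε * γA' - γ) * s) := by
      intro s
      simp only [hG]
      rw [← Real.exp_add, show -γA' * (ε * (r - s)) + -γ * s =
        -γA' * (ε * r) + (ε * γA' - γ) * s by ring, Real.exp_add]
      ring
    have hGval : ∫ s in r..0, G s = (Lf * ((Mu + Mv) * Real.exp (-γA' * (ε * r)))) *
        ((1 - Real.exp ((ε * γA' - γ) * r)) / (ε * γA' - γ)) := by
      simp_rw [hGpt]
      rw [intervalIntegral.integral_const_mul, integral_exp_mul _ _ _ hbne]
      norm_num
    have habs0 : 0 ≤ ∫ s in r..0, G s := by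
      rw [hGval]
      have h6 : 1 ≤ Real.exp ((ε * γA' - γ) * r) := by
        rw [show (1:ℝ) = Real.exp 0 by simp]
        exact Real.exp_le_exp.2 (by nlinarith)
      have h7 : (1 - Real.exp ((ε * γA' - γ) * r)) / (ε * γA' - γ) ≥ 0 := by
        apply div_nonneg_of_nonpos (by linarith) (by linarith)
      positivity
    -- assemble
    have hstep : ‖u r - u' r‖ ≤ Real.exp (-γA' * (ε * r)) * Δ₀ +
        ε * ((Lf * ((Mu + Mv) * Real.exp (-γA' * (ε * r)))) *
          ((1 - Real.exp ((ε * γA' - γ) * r)) / (ε * γA' - γ))) := by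
      rw [hdiff]
      refine (norm_add_le _ _).trans ?_
      have h8 : ‖ε • ∫ s in (0:ℝ)..r, mApply (expM A (ε * (r - s)))
            (f (u s + η s) (v s + ξ s) - f (u' s + η s) (v' s + ξ s))‖ =
          ε * ‖∫ s in (0:ℝ)..r, mApply (expM A (ε * (r - s)))
            (f (u s + η s) (v s + ξ s) - f (u' s + η s) (v' s + ξ s))‖ := by
        rw [norm_smul, Real.norm_eq_abs, abs_of_pos hε]
      rw [h8]
      refine add_le_add hn1 (mul_le_mul_of_nonneg_left ?_ hε.le)
      calc ‖∫ s in (0:ℝ)..r, mApply (expM A (ε * (r - s)))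
            (f (u s + η s) (v s + ξ s) - f (u' s + η s) (v' s + ξ s))‖ ≤
          |∫ s in r..0, G s| := hInorm
        _ = ∫ s in r..0, G s := abs_of_nonneg habs0
        _ = _ := hGval
    -- pure real-number computation
    have hw : Real.exp (γ * r) * Real.exp (-γA' * (ε * r)) = Real.exp ((γ - ε * γA') * r) := by
      rw [← Real.exp_add]; congr 1; ring
    have hwE3 : Real.exp ((γ - ε * γA') * r) * Real.exp ((ε * γA' - γ) * r) = 1 := by
      rw [← Real.exp_add, show (γ - ε * γA') * r + (ε * γA' - γ) * r = 0 by ring,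
        Real.exp_zero]
    have hw1 : Real.exp ((γ - ε * γA') * r) ≤ 1 := by
      rw [show (1:ℝ) = Real.exp 0 by simp]
      exact Real.exp_le_exp.2 (by nlinarith)
    have hw0 : 0 < Real.exp ((γ - ε * γA') * r) := Real.exp_pos _
    have hkey : Real.exp ((γ - ε * γA') * r) *
        ((1 - Real.exp ((ε * γA' - γ) * r)) / (ε * γA' - γ)) ≤ 1 / (γ - ε * γA') := by
      have h8 : Real.exp ((γ - ε * γA') * r) *
          ((1 - Real.exp ((ε * γA' - γ) * r)) / (ε * γA' - γ)) =
          (1 - Real.exp ((γ - ε * γA') * r)) / (γ - ε * γA') := by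
        rw [← mul_div_assoc, div_eq_div_iff hbne (by linarith)]
        linear_combination (-(γ - ε * γA')) * hwE3
      rw [h8]
      gcongr
      linarith
    calc Real.exp (γ * r) * ‖u r - u' r‖ ≤ Real.exp (γ * r) *
          (Real.exp (-γA' * (ε * r)) * Δ₀ +
            ε * ((Lf * ((Mu + Mv) * Real.exp (-γA' * (ε * r)))) *
              ((1 - Real.exp ((ε * γA' - γ) * r)) / (ε * γA' - γ)))) :=
        mul_le_mul_of_nonneg_left hstep (Real.exp_pos _).le
      _ = Real.exp ((γ - ε * γA') * r) * Δ₀ + ε * Lf * (Mu + Mv) *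
          (Real.exp ((γ - ε * γA') * r) *
            ((1 - Real.exp ((ε * γA' - γ) * r)) / (ε * γA' - γ))) := by
              rw [← hw]; ring
      _ ≤ Δ₀ + ε * Lf / (γ - ε * γA') * (Mu + Mv) := by
              have t1 : Real.exp ((γ - ε * γA') * r) * Δ₀ ≤ Δ₀ := by
                nlinarith [norm_nonneg (u₀ - u₀')]
              have t2 : ε * Lf * (Mu + Mv) * (Real.exp ((γ - ε * γA') * r) *
                  ((1 - Real.exp ((ε * γA' - γ) * r)) / (ε * γA' - γ))) ≤
                  ε * Lf * (Mu + Mv) * (1 / (γ - ε * γA')) :=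
                mul_le_mul_of_nonneg_left hkey (by positivity)
              have t3 : ε * Lf * (Mu + Mv) * (1 / (γ - ε * γA')) =
                  ε * Lf / (γ - ε * γA') * (Mu + Mv) := by ring
              linarith
  -- CLAIM 2
  have claim2 : ∀ r ≤ (0:ℝ), Real.exp (γ * r) * ‖v r - v' r‖ ≤
      Lg / (γB - γ) * (Mu + Mv) := by
    intro r hr
    obtain ⟨hIv, hveq⟩ := hKBv r hr
    obtain ⟨hIv', hv'eq⟩ := hKBv' r hr
    have hdiff : v r - v' r = ∫ s in Iic r, mApply (expM B (r - s))
        (g (u s + η s) (v s + ξ s) - g (u' s + η s) (v' s + ξ s)) := by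
      rw [hveq, hv'eq]
      unfold KB
      rw [← integral_sub hIv hIv']
      congr 1; funext s; simp [mApply, map_sub]
    set G₂ : ℝ → ℝ := fun x =>
      (Lg * ((Mu + Mv) * Real.exp (-γB * r))) * Real.exp ((γB - γ) * x) with hG₂
    have hIG₂ : Integrable G₂ (volume.restrict (Iic r)) :=
      ((integrableOn_exp_mul_Iic' hd r).const_mul _)
    have hbound : ∀ᵐ x ∂(volume.restrict (Iic r)),
        ‖mApply (expM B (r - x))
          (g (u x + η x) (v x + ξ x) - g (u' x + η x) (v' x + ξ x))‖ ≤ G₂ x := by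
      refine (ae_restrict_iff' measurableSet_Iic).2 (Eventually.of_forall fun x hx => ?_)
      have hx0 : x ≤ 0 := le_trans hx hr
      have hrx : (0:ℝ) ≤ r - x := by simp at hx; linarith
      have step1 := hB _ hrx (g (u x + η x) (v x + ξ x) - g (u' x + η x) (v' x + ξ x))
      have step2 := hgLip (u x + η x) (v x + ξ x) (u' x + η x) (v' x + ξ x)
      simp only [add_sub_add_right_eq_sub] at step2
      have h1 := hDu' x hx0
      have h2 := hDv' x hx0
      have e1 := Real.exp_pos (-γB * (r - x))
      have e2 := Real.exp_pos (-γ * x)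
      have hmerge : Real.exp (-γB * (r - x)) * Real.exp (-γ * x) =
          Real.exp (-γB * r) * Real.exp ((γB - γ) * x) := by
        rw [← Real.exp_add, ← Real.exp_add]; congr 1; ring
      calc ‖mApply (expM B (r - x))
            (g (u x + η x) (v x + ξ x) - g (u' x + η x) (v' x + ξ x))‖ ≤
            Real.exp (-γB * (r - x)) *
              ‖g (u x + η x) (v x + ξ x) - g (u' x + η x) (v' x + ξ x)‖ := step1
        _ ≤ Real.exp (-γB * (r - x)) * (Lg * (‖u x - u' x‖ + ‖v x - v' x‖)) :=
            mul_le_mul_of_nonneg_left step2 e1.le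
        _ ≤ Real.exp (-γB * (r - x)) * (Lg * (Real.exp (-γ * x) * (Mu + Mv))) := by
            have key := mul_le_mul_of_nonneg_left (add_le_add h1 h2)
              (mul_nonneg e1.le hLg.le)
            linarith [key]
        _ = G₂ x := by
            simp only [hG₂]
            linear_combination (Lg * (Mu + Mv)) * hmerge
    have hnorm : ‖v r - v' r‖ ≤ ∫ x in Iic r, G₂ x := by
      rw [hdiff]
      exact norm_integral_le_of_norm_le hIG₂ hbound
    have hval : ∫ x in Iic r, G₂ x = (Lg * ((Mu + Mv) * Real.exp (-γB * r))) *
        (Real.exp ((γB - γ) * r) / (γB - γ)) := by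
      simp only [hG₂]
      rw [integral_const_mul, integral_exp_mul_Iic' hd r]
    have hmerge2 : Real.exp (γ * r) * (Real.exp (-γB * r) * Real.exp ((γB - γ) * r)) = 1 := by
      rw [← Real.exp_add, ← Real.exp_add, show γ * r + (-γB * r + (γB - γ) * r) = 0 by ring,
        Real.exp_zero]
    calc Real.exp (γ * r) * ‖v r - v' r‖ ≤ Real.exp (γ * r) *
          ((Lg * ((Mu + Mv) * Real.exp (-γB * r))) * (Real.exp ((γB - γ) * r) / (γB - γ))) := by
              rw [← hval]
              exact mul_le_mul_of_nonneg_left hnorm (Real.exp_pos _).le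
      _ = Lg / (γB - γ) * (Mu + Mv) *
          (Real.exp (γ * r) * (Real.exp (-γB * r) * Real.exp ((γB - γ) * r))) := by
              field_simp
      _ = Lg / (γB - γ) * (Mu + Mv) := by rw [hmerge2, mul_one]
  -- conclude
  have hne : (Du '' Iic 0).Nonempty := (Set.nonempty_Iic).image Du
  have hne' : (Dv '' Iic 0).Nonempty := (Set.nonempty_Iic).image Dv
  have hMuB : Mu ≤ Δ₀ + ε * Lf / (γ - ε * γA') * (Mu + Mv) := by
    apply csSup_le hne
    rintro x ⟨r, hr, rfl⟩
    exact claim1 r hr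
  have hMvB : Mv ≤ Lg / (γB - γ) * (Mu + Mv) := by
    apply csSup_le hne'
    rintro x ⟨r, hr, rfl⟩
    exact claim2 r hr
  have hρ1 : 0 < 1 - (ε * Lf / (γ - ε * γA') + Lg / (γB - γ)) := by linarith
  have hSb : Mu + Mv ≤ Δ₀ / (1 - (ε * Lf / (γ - ε * γA') + Lg / (γB - γ))) := by
    rw [le_div_iff₀ hρ1]
    nlinarith [hMuB, hMvB]
  intro t ht s hs
  have h1 := hMu t ht
  have h2 := hMv s hs
  linarith
end
end

section
/- Let Φ = (u,v) ∈ C_γ^− and set G_Φ(s) := g(u(s)+η(s), v(s)+ξ(s)) for s ≤ 0. Then the following are equivalent: (i) for all τ ≤ t ≤ 0, v(t) = e^{B(t−τ)} v(τ) + ∫_τ^t e^{B(t−s)} G_Φ(s) ds; (ii) for all t ≤ 0, the integral ∫_{−∞}^t e^{B(t−s)} G_Φ(s) ds converges absolutely and v(t) = ∫_{−∞}^t e^{B(t−s)} G_Φ(s) ds. -/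
open MeasureTheory Set Filter
open Topology

noncomputable section

namespace St9
variable {n : ℕ}

lemma mApply_mul (M N : Matrix (Fin n) (Fin n) ℝ) (x : Vec n) :
    mApply (M * N) x = mApply M (mApply N x) := by
  simp [mApply, Matrix.toEuclideanLin_apply, Matrix.mulVec_mulVec]

lemma expM_add (B : Matrix (Fin n) (Fin n) ℝ) (a b : ℝ) :
    expM B (a + b) = expM B a * expM B b := by
  rw [expM, add_smul]
  exact Matrix.exp_add_of_commute _ _ (((Commute.refl B).smul_left a).smul_right b)

lemma mApply_expM_comp (B : Matrix (Fin n) (Fin n) ℝ) (a b : ℝ) (x : Vec n) :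
    mApply (expM B a) (mApply (expM B b) x) = mApply (expM B (a + b)) x := by
  rw [expM_add, mApply_mul]

noncomputable def mCLM (M : Matrix (Fin n) (Fin n) ℝ) : Vec n →L[ℝ] Vec n :=
  LinearMap.toContinuousLinearMap (Matrix.toEuclideanLin M)

lemma mCLM_apply (M : Matrix (Fin n) (Fin n) ℝ) (x : Vec n) : mCLM M x = mApply M x := rfl

lemma continuous_expM (B : Matrix (Fin n) (Fin n) ℝ) : Continuous (expM B) := by
  letI : SeminormedRing (Matrix (Fin n) (Fin n) ℝ) := Matrix.linftyOpSemiNormedRing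
  letI : NormedRing (Matrix (Fin n) (Fin n) ℝ) := Matrix.linftyOpNormedRing
  letI : NormedAlgebra ℝ (Matrix (Fin n) (Fin n) ℝ) := Matrix.linftyOpNormedAlgebra
  letI : NormedAlgebra ℚ (Matrix (Fin n) (Fin n) ℝ) := Matrix.linftyOpNormedAlgebra
  exact NormedSpace.exp_continuous.comp (continuous_id.smul continuous_const)

lemma continuousOn_mApply' (E : ℝ → Matrix (Fin n) (Fin n) ℝ) (hE : Continuous E)
    {w : ℝ → Vec n} {S : Set ℝ} (hw : ContinuousOn w S) :
    ContinuousOn (fun s => mApply (E s) (w s)) S := by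
  simp only [mApply, Matrix.toEuclideanLin_apply]
  have hw' : ContinuousOn (fun s => (WithLp.equiv 2 (Fin n → ℝ)) (w s)) S :=
    (PiLp.continuous_ofLp 2 _).comp_continuousOn hw
  have h1 : ContinuousOn (fun s => (E s).mulVec ((WithLp.equiv 2 (Fin n → ℝ)) (w s))) S := by
    apply continuousOn_pi.2
    intro i
    simp only [Matrix.mulVec, dotProduct]
    apply continuousOn_finset_sum _
    intro j _
    exact ((continuous_pi_iff.1 (continuous_pi_iff.1 hE i) j).continuousOn).mul
      ((continuousOn_pi.1 hw') j)
  exact (PiLp.continuous_toLp 2 _).comp_continuousOn h1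

lemma continuousOn_F (B : Matrix (Fin n) (Fin n) ℝ) (t : ℝ) {w : ℝ → Vec n} {S : Set ℝ}
    (hw : ContinuousOn w S) :
    ContinuousOn (fun s => mApply (expM B (t - s)) (w s)) S :=
  continuousOn_mApply' _ ((continuous_expM B).comp (continuous_const.sub continuous_id)) hw

lemma memCneg_bound {γ : ℝ} {u : ℝ → Vec n} (hu : memCneg γ u) :
    ∃ K : ℝ, 0 ≤ K ∧ ∀ s ≤ (0:ℝ), ‖u s‖ ≤ K * Real.exp (-γ * s) := by
  obtain ⟨b, hb⟩ := hu.2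
  refine ⟨max b 0, le_max_right _ _, fun s hs => ?_⟩
  have h : Real.exp (γ * s) * ‖u s‖ ≤ b := hb (mem_image_of_mem _ hs)
  have hexp : (0:ℝ) < Real.exp (γ * s) := Real.exp_pos _
  have key : ‖u s‖ = (Real.exp (γ * s) * ‖u s‖) * Real.exp (-(γ * s)) := by
    rw [Real.exp_neg]; field_simp
  rw [show -γ * s = -(γ * s) by ring, key]
  have := Real.exp_pos (-(γ * s))
  gcongr
  exact h.trans (le_max_left _ _)

lemma integrableOn_exp_mul_Iic {c : ℝ} (hc : 0 < c) (t : ℝ) :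
    IntegrableOn (fun s => Real.exp (c * s)) (Iic t) := by
  refine integrableOn_Iic_of_intervalIntegral_norm_bounded (Real.exp (c * t) / c) t
    (fun y => ((Real.continuous_exp.comp (continuous_const.mul continuous_id)).intervalIntegrable
      y t).1) tendsto_id ?_
  filter_upwards with y
  have h1 : ∀ x : ℝ, ‖Real.exp (c * x)‖ = Real.exp (c * x) := fun x =>
    Real.norm_of_nonneg (Real.exp_pos _).le
  simp_rw [h1]
  have h3 := intervalIntegral.smul_integral_comp_mul_left (fun x => Real.exp x) c (a := y) (b := t)
  rw [integral_exp, smul_eq_mul] at h3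
  rw [le_div_iff₀ hc]
  nlinarith [Real.exp_pos (c * y)]

end St9

/-- for `Φ = (u,v) ∈ C_γ^-`, the variation-of-constants identity on every
interval `[τ, t]` with `τ ≤ t ≤ 0` is equivalent to the Lyapunov–Perron integral
representation `v(t) = ∫_{-∞}^t e^{B(t−s)} G_Φ(s) ds` (with absolute convergence). -/
theorem statement9
    (n : ℕ) (hn : 0 < n)
    (B : Matrix (Fin n) (Fin n) ℝ) (γB : ℝ) (hγB : 0 < γB)
    (hB : ∀ t ≥ (0:ℝ), ∀ y : Vec n, ‖mApply (expM B t) y‖ ≤ Real.exp (-γB * t) * ‖y‖)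
    (γ : ℝ) (hγ : 0 < γ) (hγγB : γ < γB)
    (g : Vec n → Vec n → Vec n) (Lg Cg : ℝ) (hLg : 0 < Lg) (hCg : 0 < Cg)
    (hgLip : ∀ x₁ y₁ x₂ y₂ : Vec n,
      ‖g x₁ y₁ - g x₂ y₂‖ ≤ Lg * (‖x₁ - x₂‖ + ‖y₁ - y₂‖))
    (hgGrow : ∀ x y : Vec n, ‖g x y‖ ≤ Lg * (Cg + ‖x‖ + ‖y‖))
    (η ξ : ℝ → Vec n) (hη : memCneg γ η) (hξ : memCneg γ ξ)
    (u v : ℝ → Vec n) (hu : memCneg γ u) (hv : memCneg γ v) :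
    (∀ τ t : ℝ, τ ≤ t → t ≤ 0 →
        v t = mApply (expM B (t - τ)) (v τ) +
          ∫ s in τ..t, mApply (expM B (t - s)) (g (u s + η s) (v s + ξ s))) ↔
      (∀ t ≤ (0:ℝ),
        IntegrableOn (fun s => mApply (expM B (t - s)) (g (u s + η s) (v s + ξ s)))
            (Iic t) volume ∧
          v t = ∫ s in Iic t, mApply (expM B (t - s)) (g (u s + η s) (v s + ξ s))) := by

  open St9 in
  constructor
  · -- variation of constants ⇒ Lyapunov–Perron
    intro h t ht
    -- bounds
    obtain ⟨Ku, hKu0, hKu⟩ := memCneg_bound hu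
    obtain ⟨Kv, hKv0, hKv⟩ := memCneg_bound hv
    obtain ⟨Kη, hKη0, hKη⟩ := memCneg_bound hη
    obtain ⟨Kξ, hKξ0, hKξ⟩ := memCneg_bound hξ
    have hGbd : ∀ s ≤ (0:ℝ), ‖g (u s + η s) (v s + ξ s)‖ ≤
        (Lg * (Cg + Ku + Kη + Kv + Kξ)) * Real.exp (-γ * s) := by
      intro s hs
      have he1 : (1:ℝ) ≤ Real.exp (-γ * s) := by
        have := Real.exp_le_exp.2 (show (0:ℝ) ≤ -γ * s by nlinarith)
        rwa [Real.exp_zero] at this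
      have h2 := hgGrow (u s + η s) (v s + ξ s)
      have h3 : ‖u s + η s‖ ≤ (Ku + Kη) * Real.exp (-γ * s) := by
        refine (norm_add_le _ _).trans ?_
        have := hKu s hs; have := hKη s hs; nlinarith
      have h4 : ‖v s + ξ s‖ ≤ (Kv + Kξ) * Real.exp (-γ * s) := by
        refine (norm_add_le _ _).trans ?_
        have := hKv s hs; have := hKξ s hs; nlinarith
      nlinarith [mul_le_mul_of_nonneg_left h3 hLg.le, mul_le_mul_of_nonneg_left h4 hLg.le,
        mul_le_mul_of_nonneg_left he1 (mul_nonneg hLg.le hCg.le)]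
    have hGcont : ContinuousOn (fun s => g (u s + η s) (v s + ξ s)) (Iic 0) := by
      have hg : Continuous fun p : Vec n × Vec n => g p.1 p.2 := by
        have hL : LipschitzWith (⟨2 * Lg, by positivity⟩ : NNReal) (fun p : Vec n × Vec n => g p.1 p.2) := by
          apply LipschitzWith.of_dist_le_mul
          intro p q
          rw [dist_eq_norm]
          refine (hgLip _ _ _ _).trans ?_
          have e1 : ‖p.1 - q.1‖ = dist p.1 q.1 := (dist_eq_norm _ _).symm
          have e2 : ‖p.2 - q.2‖ = dist p.2 q.2 := (dist_eq_norm _ _).symm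
          rw [e1, e2, Prod.dist_eq]; change _ ≤ 2 * Lg * _
          have m1 := le_max_left (dist p.1 q.1) (dist p.2 q.2)
          have m2 := le_max_right (dist p.1 q.1) (dist p.2 q.2)
          nlinarith [dist_nonneg (x := p.1) (y := q.1), dist_nonneg (x := p.2) (y := q.2)]
        exact hL.continuous
      have hpair : ContinuousOn (fun s => ((u s + η s, v s + ξ s) : Vec n × Vec n)) (Iic 0) :=
        (hu.1.add hη.1).prodMk (hv.1.add hξ.1)
      exact hg.comp_continuousOn hpair
    have hFint : IntegrableOn
        (fun s => mApply (expM B (t - s)) (g (u s + η s) (v s + ξ s))) (Iic t) volume := by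
      have hcont : ContinuousOn
          (fun s => mApply (expM B (t - s)) (g (u s + η s) (v s + ξ s))) (Iic t) :=
        continuousOn_F B t (hGcont.mono (Iic_subset_Iic.2 ht))
      refine Integrable.mono'
        ((St9.integrableOn_exp_mul_Iic (sub_pos.2 hγγB) t).const_mul
          ((Lg * (Cg + Ku + Kη + Kv + Kξ)) * Real.exp (-γB * t)))
        (hcont.aestronglyMeasurable measurableSet_Iic) ?_
      filter_upwards [ae_restrict_mem measurableSet_Iic] with s hs
      have hst : s ≤ t := hs
      have hs0 : s ≤ 0 := hst.trans ht
      have h1 := hB (t - s) (by linarith) (g (u s + η s) (v s + ξ s))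
      have h2 : Real.exp (-γB * (t - s)) * ‖g (u s + η s) (v s + ξ s)‖ ≤
          Real.exp (-γB * (t - s)) *
            ((Lg * (Cg + Ku + Kη + Kv + Kξ)) * Real.exp (-γ * s)) :=
        mul_le_mul_of_nonneg_left (hGbd s hs0) (Real.exp_pos _).le
      refine h1.trans (h2.trans (le_of_eq ?_))
      rw [show Real.exp (-γB * (t - s)) *
            ((Lg * (Cg + Ku + Kη + Kv + Kξ)) * Real.exp (-γ * s)) =
          (Lg * (Cg + Ku + Kη + Kv + Kξ)) *
            (Real.exp (-γB * (t - s)) * Real.exp (-γ * s)) from by ring,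
        ← Real.exp_add, show -γB * (t - s) + -γ * s = -γB * t + (γB - γ) * s from by ring,
        Real.exp_add]
      ring
    refine ⟨hFint, ?_⟩
    have hlim1 := intervalIntegral_tendsto_integral_Iic t hFint (tendsto_id (α := ℝ))
    have hlim2 : Tendsto (fun τ => mApply (expM B (t - τ)) (v τ)) atBot (𝓝 0) := by
      apply squeeze_zero_norm'
        (a := fun τ => Kv * Real.exp (-γB * t) * Real.exp ((γB - γ) * τ))
      · filter_upwards [eventually_le_atBot t] with τ hτ
        have hτ0 : τ ≤ 0 := hτ.trans ht
        have h1 := hB (t - τ) (by linarith) (v τ)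
        have h2 : Real.exp (-γB * (t - τ)) * ‖v τ‖ ≤
            Real.exp (-γB * (t - τ)) * (Kv * Real.exp (-γ * τ)) :=
          mul_le_mul_of_nonneg_left (hKv τ hτ0) (Real.exp_pos _).le
        refine h1.trans (h2.trans (le_of_eq ?_))
        rw [show Real.exp (-γB * (t - τ)) * (Kv * Real.exp (-γ * τ)) =
            Kv * (Real.exp (-γB * (t - τ)) * Real.exp (-γ * τ)) from by ring,
          ← Real.exp_add, show -γB * (t - τ) + -γ * τ = -γB * t + (γB - γ) * τ from by ring,
          Real.exp_add]
        ring
      · have h3 : Tendsto (fun τ : ℝ => (γB - γ) * τ) atBot atBot :=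
          Tendsto.const_mul_atBot (sub_pos.2 hγγB) tendsto_id
        have h4 : Tendsto (fun τ => Real.exp ((γB - γ) * τ)) atBot (𝓝 0) :=
          Real.tendsto_exp_atBot.comp h3
        have h5 := h4.const_mul (Kv * Real.exp (-γB * t))
        simpa using h5
    have heq : (fun τ => mApply (expM B (t - τ)) (v τ) +
          ∫ s in τ..t, mApply (expM B (t - s)) (g (u s + η s) (v s + ξ s)))
        =ᶠ[atBot] (fun _ => v t) := by
      filter_upwards [eventually_le_atBot t] with τ hτ
      exact (h τ t hτ ht).symm
    have hlim3 := hlim2.add hlim1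
    rw [zero_add] at hlim3
    exact (tendsto_nhds_unique (hlim3.congr' heq) tendsto_const_nhds).symm
  · -- Lyapunov–Perron ⇒ variation of constants
    intro h τ t hτt ht
    have hτ0 : τ ≤ 0 := hτt.trans ht
    obtain ⟨hIτ, hvτ⟩ := h τ hτ0
    obtain ⟨hIt, hvt⟩ := h t ht
    have key : mApply (expM B (t - τ)) (v τ) =
        ∫ s in Iic τ, mApply (expM B (t - s)) (g (u s + η s) (v s + ξ s)) := by
      rw [hvτ, ← mCLM_apply, ← ContinuousLinearMap.integral_comp_comm _ hIτ]
      refine integral_congr_ae (Eventually.of_forall fun s => ?_)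
      simp only [mCLM_apply, mApply_expM_comp]
      rw [show t - τ + (τ - s) = t - s from by ring]
    have hsplit : (∫ s in Iic t, mApply (expM B (t - s)) (g (u s + η s) (v s + ξ s))) =
        (∫ s in Iic τ, mApply (expM B (t - s)) (g (u s + η s) (v s + ξ s))) +
          ∫ s in Ioc τ t, mApply (expM B (t - s)) (g (u s + η s) (v s + ξ s)) := by
      rw [← setIntegral_union (Iic_disjoint_Ioc le_rfl) measurableSet_Ioc
        (hIt.mono_set (Iic_subset_Iic.2 hτt)) (hIt.mono_set Ioc_subset_Iic_self),
        Iic_union_Ioc_eq_Iic hτt]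
    rw [hvt, key, intervalIntegral.integral_of_le hτt, hsplit]
end
end

section
/- Let F, G : [0,∞) × ℝ^n × ℝ^n → ℝ^n be continuous with |F(s,a,b)| ≤ L_f(|a|+|b|) and |G(s,a,b)| ≤ L_g(|a|+|b|) for all s ≥ 0 and a, b ∈ ℝ^n, let v̂₀ ∈ ℝ^n, and set ρ(ε) := εL_f/(γ − εγ_A') + L_g/(γ_B − γ). Suppose ρ(ε) < 1 and Ψ = (û,v̂) ∈ C_γ^+ satisfies, for all t ≥ 0, û(t) = ε∫_t^{+∞} e^{εA(t−s)} F(s, û(s), v̂(s)) ds and v̂(t) = e^{Bt} v̂₀ + ∫_0^t e^{B(t−s)} G(s, û(s), v̂(s)) ds. Then ‖Ψ‖_γ^+ ≤ |v̂₀|/(1 − ρ(ε)); in particular |û(t)| + |v̂(t)| ≤ e^{−γt}|v̂₀|/(1 − ρ(ε)) for all t ≥ 0 (exponential tracking). -/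
open MeasureTheory Set Filter

noncomputable section

/-- The norm `‖u‖_γ^+ = sup_{t ≥ 0} e^{γ t} ‖u t‖` on `C_γ^+`. -/
noncomputable def pNorm {n : ℕ} (γ : ℝ) (u : ℝ → Vec n) : ℝ :=
  sSup ((fun t => Real.exp (γ * t) * ‖u t‖) '' Ici (0:ℝ))

/-- Membership in the Banach space `C_γ^+`: continuity on `[0, ∞)` together with
finiteness of the norm `sup_{t ≥ 0} e^{γ t} ‖u t‖`. -/
def memCpos {n : ℕ} (γ : ℝ) (u : ℝ → Vec n) : Prop :=
  ContinuousOn u (Ici 0) ∧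
    BddAbove ((fun t => Real.exp (γ * t) * ‖u t‖) '' Ici (0:ℝ))

/-- `I_A^ε(Ψ)(t) = ε ∫_t^∞ e^{εA(t−s)} F(s, û(s), v̂(s)) ds`. -/
noncomputable def IA {n : ℕ} (A : Matrix (Fin n) (Fin n) ℝ) (ε : ℝ)
    (F : ℝ → Vec n → Vec n → Vec n) (u v : ℝ → Vec n) (t : ℝ) : Vec n :=
  ε • ∫ s in Ici t, mApply (expM A (ε * (t - s))) (F s (u s) (v s))

/-- `I_B^ε(Ψ)(t) = e^{Bt} v̂₀ + ∫_0^t e^{B(t−s)} G(s, û(s), v̂(s)) ds`. -/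
noncomputable def IB {n : ℕ} (B : Matrix (Fin n) (Fin n) ℝ)
    (G : ℝ → Vec n → Vec n → Vec n) (v₀ : Vec n) (u v : ℝ → Vec n) (t : ℝ) : Vec n :=
  mApply (expM B t) v₀ + ∫ s in (0:ℝ)..t, mApply (expM B (t - s)) (G s (u s) (v s))


private lemma aux_int_exp_Ioi (t : ℝ) {c : ℝ} (hc : 0 < c) :
    ∫ s in Ioi t, Real.exp (-(c * s)) = Real.exp (-(c * t)) / c := by
  have h := MeasureTheory.integral_comp_mul_left_Ioi (fun x => Real.exp (-x)) t hc
  simp only [smul_eq_mul] at h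
  rw [h, integral_exp_neg_Ioi]
  rw [div_eq_inv_mul]

private lemma aux_intOn_exp (t : ℝ) {c : ℝ} (hc : 0 < c) :
    IntegrableOn (fun s => Real.exp (-(c * s))) (Ici t) := by
  rw [integrableOn_Ici_iff_integrableOn_Ioi]
  simpa [neg_mul] using exp_neg_integrableOn_Ioi t hc

private lemma aux_int_exp_interval {c : ℝ} (hc : c ≠ 0) (t : ℝ) :
    ∫ s in (0:ℝ)..t, Real.exp (c * s) = (Real.exp (c * t) - 1) / c := by
  have : ∀ x ∈ Set.uIcc (0:ℝ) t, HasDerivAt (fun s => Real.exp (c * s) / c)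
      (Real.exp (c * x)) x := by
    intro x _
    have h1 : HasDerivAt (fun s : ℝ => c * s) c x := by
      simpa using (hasDerivAt_id x).const_mul c
    have h2 := (Real.hasDerivAt_exp (c * x)).comp x h1
    have h3 := h2.div_const c
    simpa [mul_div_assoc, div_self hc] using h3
  have h := intervalIntegral.integral_eq_sub_of_hasDerivAt this
    ((Real.continuous_exp.comp (continuous_const.mul continuous_id)).intervalIntegrable 0 t)
  rw [h]
  simp [sub_div]

/-- exponential tracking: a solution of the forward Lyapunov–Perron
equations with `ρ(ε) < 1` satisfies `‖Ψ‖_γ^+ ≤ |v̂₀|/(1 − ρ(ε))`, hence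
`|û(t)| + |v̂(t)| ≤ e^{−γt}|v̂₀|/(1 − ρ(ε))` for all `t ≥ 0`. -/
theorem statement12
    (n : ℕ) (hn : 0 < n)
    (A B : Matrix (Fin n) (Fin n) ℝ) (γA' γB : ℝ) (hγA' : 0 < γA') (hγB : 0 < γB)
    (hA : ∀ t ≤ (0:ℝ), ∀ x : Vec n, ‖mApply (expM A t) x‖ ≤ Real.exp (-γA' * t) * ‖x‖)
    (hB : ∀ t ≥ (0:ℝ), ∀ y : Vec n, ‖mApply (expM B t) y‖ ≤ Real.exp (-γB * t) * ‖y‖)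
    (γ ε : ℝ) (hγ : 0 < γ) (hγγB : γ < γB) (hε : 0 < ε) (hεγ : ε * γA' < γ)
    (F G : ℝ → Vec n → Vec n → Vec n) (Lf Lg : ℝ) (hLf : 0 < Lf) (hLg : 0 < Lg)
    (hFcont : Continuous fun p : ℝ × Vec n × Vec n => F p.1 p.2.1 p.2.2)
    (hGcont : Continuous fun p : ℝ × Vec n × Vec n => G p.1 p.2.1 p.2.2)
    (hFgrow : ∀ s ≥ (0:ℝ), ∀ a b : Vec n, ‖F s a b‖ ≤ Lf * (‖a‖ + ‖b‖))
    (hGgrow : ∀ s ≥ (0:ℝ), ∀ a b : Vec n, ‖G s a b‖ ≤ Lg * (‖a‖ + ‖b‖))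
    (v₀ : Vec n)
    (hρ : ε * Lf / (γ - ε * γA') + Lg / (γB - γ) < 1)
    (u v : ℝ → Vec n) (hu : memCpos γ u) (hv : memCpos γ v)
    (hfixA : ∀ t ≥ (0:ℝ),
      IntegrableOn (fun s => mApply (expM A (ε * (t - s))) (F s (u s) (v s)))
          (Ici t) volume ∧
        u t = IA A ε F u v t)
    (hfixB : ∀ t ≥ (0:ℝ), v t = IB B G v₀ u v t) :
    (∀ t ≥ (0:ℝ), ∀ s ≥ (0:ℝ),
        Real.exp (γ * t) * ‖u t‖ + Real.exp (γ * s) * ‖v s‖ ≤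
          ‖v₀‖ / (1 - (ε * Lf / (γ - ε * γA') + Lg / (γB - γ)))) ∧
      ∀ t ≥ (0:ℝ),
        ‖u t‖ + ‖v t‖ ≤
          Real.exp (-γ * t) * ‖v₀‖ /
            (1 - (ε * Lf / (γ - ε * γA') + Lg / (γB - γ))) := by
  classical
  have hγε : 0 < γ - ε * γA' := by linarith
  have hγB' : 0 < γB - γ := by linarith
  set ρ : ℝ := ε * Lf / (γ - ε * γA') + Lg / (γB - γ) with hρdef
  have h1ρ : 0 < 1 - ρ := by linarith
  set Mu : ℝ := sSup ((fun t => Real.exp (γ * t) * ‖u t‖) '' Ici (0:ℝ)) with hMudef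
  set Mv : ℝ := sSup ((fun t => Real.exp (γ * t) * ‖v t‖) '' Ici (0:ℝ)) with hMvdef
  have hSneu : ((fun t => Real.exp (γ * t) * ‖u t‖) '' Ici (0:ℝ)).Nonempty :=
    ⟨_, mem_image_of_mem _ (self_mem_Ici)⟩
  have hSnev : ((fun t => Real.exp (γ * t) * ‖v t‖) '' Ici (0:ℝ)).Nonempty :=
    ⟨_, mem_image_of_mem _ (self_mem_Ici)⟩
  have hMu_le : ∀ t ≥ (0:ℝ), Real.exp (γ * t) * ‖u t‖ ≤ Mu :=
    fun t ht => le_csSup hu.2 ⟨t, ht, rfl⟩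
  have hMv_le : ∀ t ≥ (0:ℝ), Real.exp (γ * t) * ‖v t‖ ≤ Mv :=
    fun t ht => le_csSup hv.2 ⟨t, ht, rfl⟩
  have hMu0 : 0 ≤ Mu := le_trans (by positivity) (hMu_le 0 le_rfl)
  have hMv0 : 0 ≤ Mv := le_trans (by positivity) (hMv_le 0 le_rfl)
  set M : ℝ := Mu + Mv with hMdef
  have hM0 : 0 ≤ M := by positivity
  -- pointwise decay bound from the sup
  have hub : ∀ s ≥ (0:ℝ), ‖u s‖ + ‖v s‖ ≤ Real.exp (-(γ * s)) * M := by
    intro s hs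
    have e1 : Real.exp (-(γ * s)) * Real.exp (γ * s) = 1 := by
      rw [← Real.exp_add]; simp
    have h2 := mul_le_mul_of_nonneg_left (hMu_le s hs) (Real.exp_nonneg (-(γ * s)))
    have h3 := mul_le_mul_of_nonneg_left (hMv_le s hs) (Real.exp_nonneg (-(γ * s)))
    rw [← mul_assoc, e1, one_mul] at h2 h3
    rw [hMdef]; nlinarith
  -- Step A
  have stepA : ∀ t ≥ (0:ℝ), Real.exp (γ * t) * ‖u t‖ ≤ ε * Lf / (γ - ε * γA') * M := by
    intro t ht
    obtain ⟨hint, heq⟩ := hfixA t ht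
    set c : ℝ := γ - ε * γA' with hcdef
    set K : ℝ := Lf * M * Real.exp (-(ε * γA' * t)) with hKdef
    have hK0 : 0 ≤ K := by positivity
    have hgint : Integrable (fun s => K * Real.exp (-(c * s)))
        (volume.restrict (Ici t)) := (aux_intOn_exp t hγε).const_mul K
    have hbnd : ∀ᵐ s ∂(volume.restrict (Ici t)),
        ‖mApply (expM A (ε * (t - s))) (F s (u s) (v s))‖ ≤ K * Real.exp (-(c * s)) := by
      filter_upwards [ae_restrict_mem measurableSet_Ici] with s hs
      have hst : t ≤ s := hs
      have hs0 : (0:ℝ) ≤ s := le_trans ht hst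
      have hneg : ε * (t - s) ≤ 0 := mul_nonpos_of_nonneg_of_nonpos hε.le (by linarith)
      have h1 := hA (ε * (t - s)) hneg (F s (u s) (v s))
      have h2 : ‖F s (u s) (v s)‖ ≤ Lf * (Real.exp (-(γ * s)) * M) := by
        calc ‖F s (u s) (v s)‖ ≤ Lf * (‖u s‖ + ‖v s‖) := hFgrow s hs0 _ _
        _ ≤ Lf * (Real.exp (-(γ * s)) * M) :=
          mul_le_mul_of_nonneg_left (hub s hs0) hLf.le
      calc ‖mApply (expM A (ε * (t - s))) (F s (u s) (v s))‖
          ≤ Real.exp (-γA' * (ε * (t - s))) * ‖F s (u s) (v s)‖ := h1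
        _ ≤ Real.exp (-γA' * (ε * (t - s))) * (Lf * (Real.exp (-(γ * s)) * M)) :=
            mul_le_mul_of_nonneg_left h2 (Real.exp_nonneg _)
        _ = (Lf * M) * (Real.exp (-γA' * (ε * (t - s))) * Real.exp (-(γ * s))) := by ring
        _ = (Lf * M) * Real.exp (-γA' * (ε * (t - s)) + -(γ * s)) := by rw [← Real.exp_add]
        _ = (Lf * M) * (Real.exp (-(ε * γA' * t)) * Real.exp (-((γ - ε * γA') * s))) := by
            rw [← Real.exp_add]; congr 1; ring
        _ = K * Real.exp (-(c * s)) := by rw [hKdef, hcdef]; ring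
    have hnorm : ‖∫ s in Ici t, mApply (expM A (ε * (t - s))) (F s (u s) (v s))‖
        ≤ K * (Real.exp (-(c * t)) / c) := by
      calc ‖∫ s in Ici t, mApply (expM A (ε * (t - s))) (F s (u s) (v s))‖
          ≤ ∫ s in Ici t, K * Real.exp (-(c * s)) :=
            norm_integral_le_of_norm_le hgint hbnd
        _ = K * (Real.exp (-(c * t)) / c) := by
            rw [MeasureTheory.integral_const_mul, integral_Ici_eq_integral_Ioi,
              aux_int_exp_Ioi t hγε]
    have hut : ‖u t‖ ≤ ε * (K * (Real.exp (-(c * t)) / c)) := by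
      rw [heq]
      unfold IA
      rw [norm_smul, Real.norm_eq_abs, abs_of_pos hε]
      exact mul_le_mul_of_nonneg_left hnorm hε.le
    have e1 : Real.exp (γ * t) * Real.exp (-(ε * γA' * t)) * Real.exp (-(c * t)) = 1 := by
      rw [← Real.exp_add, ← Real.exp_add, hcdef,
        show γ * t + -(ε * γA' * t) + -((γ - ε * γA') * t) = 0 by ring, Real.exp_zero]
    calc Real.exp (γ * t) * ‖u t‖
        ≤ Real.exp (γ * t) * (ε * (K * (Real.exp (-(c * t)) / c))) :=
          mul_le_mul_of_nonneg_left hut (Real.exp_nonneg _)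
      _ = ε * Lf / c * M * (Real.exp (γ * t) * Real.exp (-(ε * γA' * t)) *
            Real.exp (-(c * t))) := by rw [hKdef]; field_simp
      _ = ε * Lf / (γ - ε * γA') * M := by rw [e1, hcdef]; ring
  -- Step B
  have stepB : ∀ t ≥ (0:ℝ), Real.exp (γ * t) * ‖v t‖ ≤ ‖v₀‖ + Lg / (γB - γ) * M := by
    intro t ht
    set c : ℝ := γB - γ with hcdef
    set K : ℝ := Lg * M * Real.exp (-(γB * t)) with hKdef
    have hK0 : 0 ≤ K := by positivity
    have hgci : IntervalIntegrable (fun s => K * Real.exp (c * s)) volume 0 t :=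
      ((continuous_const.mul (Real.continuous_exp.comp
        (continuous_const.mul continuous_id))).intervalIntegrable 0 t)
    have hbnd : ∀ᵐ s ∂(volume.restrict (Set.uIoc (0:ℝ) t)),
        ‖mApply (expM B (t - s)) (G s (u s) (v s))‖ ≤ K * Real.exp (c * s) := by
      filter_upwards [ae_restrict_mem measurableSet_uIoc] with s hs
      rw [uIoc_of_le ht] at hs
      have hs0 : (0:ℝ) ≤ s := hs.1.le
      have hst : s ≤ t := hs.2
      have h1 := hB (t - s) (by linarith) (G s (u s) (v s))
      have h2 : ‖G s (u s) (v s)‖ ≤ Lg * (Real.exp (-(γ * s)) * M) := by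
        calc ‖G s (u s) (v s)‖ ≤ Lg * (‖u s‖ + ‖v s‖) := hGgrow s hs0 _ _
        _ ≤ Lg * (Real.exp (-(γ * s)) * M) :=
          mul_le_mul_of_nonneg_left (hub s hs0) hLg.le
      calc ‖mApply (expM B (t - s)) (G s (u s) (v s))‖
          ≤ Real.exp (-γB * (t - s)) * ‖G s (u s) (v s)‖ := h1
        _ ≤ Real.exp (-γB * (t - s)) * (Lg * (Real.exp (-(γ * s)) * M)) :=
            mul_le_mul_of_nonneg_left h2 (Real.exp_nonneg _)
        _ = (Lg * M) * (Real.exp (-γB * (t - s)) * Real.exp (-(γ * s))) := by ring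
        _ = (Lg * M) * Real.exp (-γB * (t - s) + -(γ * s)) := by rw [← Real.exp_add]
        _ = (Lg * M) * (Real.exp (-(γB * t)) * Real.exp ((γB - γ) * s)) := by
            rw [← Real.exp_add]; congr 1; ring
        _ = K * Real.exp (c * s) := by rw [hKdef, hcdef]; ring
    have hintval : ∫ s in (0:ℝ)..t, K * Real.exp (c * s) =
        K * ((Real.exp (c * t) - 1) / c) := by
      rw [intervalIntegral.integral_const_mul, aux_int_exp_interval hγB'.ne' t]
    have hIval0 : 0 ≤ K * ((Real.exp (c * t) - 1) / c) := by
      have h4 : (1:ℝ) ≤ Real.exp (c * t) := Real.one_le_exp (by positivity)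
      exact mul_nonneg hK0 (div_nonneg (by linarith) hγB'.le)
    have hnorm : ‖∫ s in (0:ℝ)..t, mApply (expM B (t - s)) (G s (u s) (v s))‖
        ≤ K * ((Real.exp (c * t) - 1) / c) := by
      have h := intervalIntegral.norm_integral_le_abs_of_norm_le hbnd hgci
      rwa [hintval, abs_of_nonneg hIval0] at h
    have hv0 : ‖v t‖ ≤ Real.exp (-(γB * t)) * ‖v₀‖ + K * ((Real.exp (c * t) - 1) / c) := by
      rw [hfixB t ht]
      unfold IB
      calc ‖mApply (expM B t) v₀ + ∫ s in (0:ℝ)..t, mApply (expM B (t - s)) (G s (u s) (v s))‖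
          ≤ ‖mApply (expM B t) v₀‖ +
            ‖∫ s in (0:ℝ)..t, mApply (expM B (t - s)) (G s (u s) (v s))‖ := norm_add_le _ _
        _ ≤ Real.exp (-(γB * t)) * ‖v₀‖ + K * ((Real.exp (c * t) - 1) / c) := by
            have := hB t ht v₀
            rw [neg_mul] at this
            exact add_le_add this hnorm
    have e1 : Real.exp (γ * t) * Real.exp (-(γB * t)) = Real.exp ((γ - γB) * t) := by
      rw [← Real.exp_add]; congr 1; ring
    have e2 : Real.exp ((γ - γB) * t) ≤ 1 :=
      Real.exp_le_one_iff.mpr (mul_nonpos_of_nonpos_of_nonneg (by linarith) ht)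
    have e3 : Real.exp (γ * t) * (K * ((Real.exp (c * t) - 1) / c)) ≤ Lg * M / c := by
      rw [hKdef, hcdef]
      have key : Real.exp (γ * t) * Real.exp (-(γB * t)) * (Real.exp ((γB - γ) * t) - 1)
          = 1 - Real.exp ((γ - γB) * t) := by
        rw [← Real.exp_add, mul_sub, mul_one, ← Real.exp_add,
          show γ * t + -(γB * t) + (γB - γ) * t = 0 by ring, Real.exp_zero,
          show γ * t + -(γB * t) = (γ - γB) * t by ring]
      calc Real.exp (γ * t) * (Lg * M * Real.exp (-(γB * t)) *
            ((Real.exp ((γB - γ) * t) - 1) / (γB - γ)))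
          = Lg * M / (γB - γ) * (Real.exp (γ * t) * Real.exp (-(γB * t)) *
              (Real.exp ((γB - γ) * t) - 1)) := by field_simp
        _ = Lg * M / (γB - γ) * (1 - Real.exp ((γ - γB) * t)) := by rw [key]
        _ ≤ Lg * M / (γB - γ) * 1 := by
            apply mul_le_mul_of_nonneg_left _ (by positivity)
            have := Real.exp_pos ((γ - γB) * t)
            linarith
        _ = Lg * M / (γB - γ) := mul_one _
    calc Real.exp (γ * t) * ‖v t‖
        ≤ Real.exp (γ * t) * (Real.exp (-(γB * t)) * ‖v₀‖ +
            K * ((Real.exp (c * t) - 1) / c)) :=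
          mul_le_mul_of_nonneg_left hv0 (Real.exp_nonneg _)
      _ = Real.exp (γ * t) * Real.exp (-(γB * t)) * ‖v₀‖ +
            Real.exp (γ * t) * (K * ((Real.exp (c * t) - 1) / c)) := by ring
      _ ≤ 1 * ‖v₀‖ + Lg * M / c := by
          apply add_le_add _ e3
          rw [e1]
          exact mul_le_mul_of_nonneg_right e2 (norm_nonneg _)
      _ = ‖v₀‖ + Lg / (γB - γ) * M := by rw [hcdef]; ring
  -- sup bounds
  have hMuB : Mu ≤ ε * Lf / (γ - ε * γA') * M := by
    apply csSup_le hSneu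
    rintro x ⟨t, ht, rfl⟩
    exact stepA t ht
  have hMvB : Mv ≤ ‖v₀‖ + Lg / (γB - γ) * M := by
    apply csSup_le hSnev
    rintro x ⟨t, ht, rfl⟩
    exact stepB t ht
  have hMρ : M ≤ ρ * M + ‖v₀‖ := by
    rw [hρdef, hMdef]; nlinarith
  have hMle : M ≤ ‖v₀‖ / (1 - ρ) := by
    rw [le_div_iff₀ h1ρ]
    nlinarith
  constructor
  · intro t ht s hs
    calc Real.exp (γ * t) * ‖u t‖ + Real.exp (γ * s) * ‖v s‖ ≤ Mu + Mv :=
        add_le_add (hMu_le t ht) (hMv_le s hs)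
      _ ≤ ‖v₀‖ / (1 - ρ) := hMle
  · intro t ht
    calc ‖u t‖ + ‖v t‖ ≤ Real.exp (-(γ * t)) * M := hub t ht
      _ ≤ Real.exp (-(γ * t)) * (‖v₀‖ / (1 - ρ)) :=
          mul_le_mul_of_nonneg_left hMle (Real.exp_nonneg _)
      _ = Real.exp (-γ * t) * ‖v₀‖ / (1 - ρ) := by rw [neg_mul]; ring
end
end

section
/- Let F : [0,∞) × ℝ^n × ℝ^n → ℝ^n be continuous with |F(s,a,b)| ≤ L_f(|a| + |b|) for all s ≥ 0, a, b ∈ ℝ^n, and let Ψ = (û,v̂) ∈ C_γ^+. Then the following are equivalent: (i) for all 0 ≤ t ≤ τ, û(t) = e^{εA(t−τ)} û(τ) − ε∫_t^τ e^{εA(t−s)} F(s, û(s), v̂(s)) ds; (ii) for all t ≥ 0, the integral ∫_t^{+∞} e^{εA(t−s)} F(s, û(s), v̂(s)) ds converges absolutely and û(t) = −ε∫_t^{+∞} e^{εA(t−s)} F(s, û(s), v̂(s)) ds. -/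
open MeasureTheory Set Filter

noncomputable section

/-- The semigroup `e^{rT}` as a continuous linear map. -/
noncomputable def eT {n : ℕ} (T : Vec n →L[ℝ] Vec n) (r : ℝ) : Vec n →L[ℝ] Vec n :=
  NormedSpace.exp (r • T)

set_option maxHeartbeats 1000000 in
open scoped Matrix.Norms.L2Operator in
lemma mApply_expM {n : ℕ} (A : Matrix (Fin n) (Fin n) ℝ) (r : ℝ) (x : Vec n) :
    mApply (expM A r) x = eT (Matrix.toEuclideanCLM (𝕜 := ℝ) A) r x := by
  simp only [eT]
  have h1 : Continuous (Matrix.toEuclideanCLM (𝕜 := ℝ) (n := Fin n)) :=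
    (AddMonoidHomClass.isometry_of_norm _
      (fun a => (Matrix.cstar_norm_def a).symm)).continuous
  let +nondep : NormedAlgebra ℚ (Matrix (Fin n) (Fin n) ℝ) := .restrictScalars ℚ ℝ _
  have h2 := NormedSpace.map_exp (Matrix.toEuclideanCLM (𝕜 := ℝ) (n := Fin n)) h1 (r • A)
  have h3 : mApply (expM A r) x = Matrix.toEuclideanCLM (𝕜 := ℝ) (expM A r) x := by
    rw [mApply, ← Matrix.coe_toEuclideanCLM_eq_toEuclideanLin]; rfl
  rw [h3, expM, h2, _root_.map_smul]

set_option maxHeartbeats 1000000 in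
lemma eT_add {n : ℕ} (T : Vec n →L[ℝ] Vec n) (a b : ℝ) (x : Vec n) :
    eT T (a + b) x = eT T a (eT T b x) := by
  simp only [eT]
  have hc : Commute (a • T) (b • T) := by
    unfold Commute SemiconjBy
    ext y
    simp only [ContinuousLinearMap.mul_apply, _root_.map_smul,
      ContinuousLinearMap.coe_smul', Pi.smul_apply, PiLp.smul_apply, smul_eq_mul]
    ring
  let +nondep : NormedAlgebra ℚ (Vec n →L[ℝ] Vec n) := .restrictScalars ℚ ℝ _
  rw [show (a + b) • T = a • T + b • T from add_smul a b T,
    NormedSpace.exp_add_of_commute hc]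
  rfl

set_option maxHeartbeats 1000000 in
lemma eT_cont0 {n : ℕ} (T : Vec n →L[ℝ] Vec n) : Continuous (eT T) := by
  unfold eT
  let +nondep : NormedAlgebra ℚ (Vec n →L[ℝ] Vec n) := .restrictScalars ℚ ℝ _
  exact NormedSpace.exp_continuous.comp (continuous_id.smul continuous_const)


set_option maxHeartbeats 4000000 in
/-- for `Ψ = (û, v̂) ∈ C_γ^+`, the backward variation-of-constants
identity on intervals `[t, τ] ⊆ [0, ∞)` is equivalent to the improper-integral
representation `û(t) = −ε ∫_t^∞ e^{εA(t−s)} F(s, û(s), v̂(s)) ds` (with absolute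
convergence). -/
theorem statement14
    (n : ℕ) (hn : 0 < n)
    (A : Matrix (Fin n) (Fin n) ℝ) (γA' : ℝ) (hγA' : 0 < γA')
    (hA : ∀ t ≤ (0:ℝ), ∀ x : Vec n, ‖mApply (expM A t) x‖ ≤ Real.exp (-γA' * t) * ‖x‖)
    (γ ε : ℝ) (hγ : 0 < γ) (hε : 0 < ε) (hεγ : ε * γA' < γ)
    (F : ℝ → Vec n → Vec n → Vec n) (Lf : ℝ) (hLf : 0 < Lf)
    (hFcont : Continuous fun p : ℝ × Vec n × Vec n => F p.1 p.2.1 p.2.2)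
    (hFgrow : ∀ s ≥ (0:ℝ), ∀ a b : Vec n, ‖F s a b‖ ≤ Lf * (‖a‖ + ‖b‖))
    (u v : ℝ → Vec n) (hu : memCpos γ u) (hv : memCpos γ v) :
    (∀ t τ : ℝ, 0 ≤ t → t ≤ τ →
        u t = mApply (expM A (ε * (t - τ))) (u τ) -
          ε • ∫ s in t..τ, mApply (expM A (ε * (t - s))) (F s (u s) (v s))) ↔
      (∀ t ≥ (0:ℝ),
        IntegrableOn (fun s => mApply (expM A (ε * (t - s))) (F s (u s) (v s)))
            (Ici t) volume ∧
          u t = -(ε • ∫ s in Ici t,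
            mApply (expM A (ε * (t - s))) (F s (u s) (v s)))) := by
  obtain ⟨huc, Cu, hCu⟩ := hu
  obtain ⟨hvc, Cv, hCv⟩ := hv
  obtain ⟨T, hTdef⟩ : ∃ T : Vec n →L[ℝ] Vec n, T = Matrix.toEuclideanCLM (𝕜 := ℝ) A :=
    ⟨_, rfl⟩
  have key : ∀ (r : ℝ) (x : Vec n),
      mApply (expM A r) x = eT T r x := fun r x => by
    rw [hTdef]; exact mApply_expM A r x
  obtain ⟨g, hgdef⟩ : ∃ g : ℝ → Vec n, g = fun s => F s (u s) (v s) := ⟨_, rfl⟩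
  have hg' : ∀ s, F s (u s) (v s) = g s := fun s => by rw [hgdef]
  -- decay bound on T-semigroup
  have hAop : ∀ r ≤ (0:ℝ), ∀ x : Vec n,
      ‖eT T r x‖ ≤ Real.exp (-γA' * r) * ‖x‖ := by
    intro r hr x; rw [← key]; exact hA r hr x
  -- norm bounds on u, v, g
  have hub : ∀ s : ℝ, 0 ≤ s → ‖u s‖ ≤ Cu * Real.exp (-γ * s) := by
    intro s hs
    have h1 : Real.exp (γ * s) * ‖u s‖ ≤ Cu := hCu (mem_image_of_mem _ hs)
    have hp : (0:ℝ) < Real.exp (γ * s) := Real.exp_pos _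
    have hq : (0:ℝ) < Real.exp (-γ * s) := Real.exp_pos _
    have hm : Real.exp (-γ * s) * Real.exp (γ * s) = 1 := by
      rw [← Real.exp_add]; ring_nf; exact Real.exp_zero
    nlinarith [norm_nonneg (u s)]
  have hvb : ∀ s : ℝ, 0 ≤ s → ‖v s‖ ≤ Cv * Real.exp (-γ * s) := by
    intro s hs
    have h1 : Real.exp (γ * s) * ‖v s‖ ≤ Cv := hCv (mem_image_of_mem _ hs)
    have hp : (0:ℝ) < Real.exp (γ * s) := Real.exp_pos _
    have hq : (0:ℝ) < Real.exp (-γ * s) := Real.exp_pos _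
    have hm : Real.exp (-γ * s) * Real.exp (γ * s) = 1 := by
      rw [← Real.exp_add]; ring_nf; exact Real.exp_zero
    nlinarith [norm_nonneg (v s)]
  obtain ⟨C, hCdef⟩ : ∃ C : ℝ, C = Lf * (Cu + Cv) := ⟨_, rfl⟩
  have hgb : ∀ s : ℝ, 0 ≤ s → ‖g s‖ ≤ C * Real.exp (-γ * s) := by
    intro s hs
    have h1 := hFgrow s hs (u s) (v s)
    have h2 := hub s hs
    have h3 := hvb s hs
    have : ‖g s‖ ≤ Lf * (‖u s‖ + ‖v s‖) := by rw [hgdef]; exact h1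
    rw [hCdef]
    nlinarith [Real.exp_pos (-γ * s)]
  have hC0 : 0 ≤ C := by
    have := hgb 0 le_rfl
    have h0 : (0:ℝ) ≤ ‖g 0‖ := norm_nonneg _
    simpa using le_trans h0 this
  -- continuity of g on [0, ∞)
  have hgc : ContinuousOn g (Ici 0) := by
    have h1 : ContinuousOn (fun s : ℝ => (s, u s, v s)) (Ici 0) :=
      (continuousOn_id.prodMk (huc.prodMk hvc))
    rw [hgdef]
    simpa [Function.comp_def] using hFcont.comp_continuousOn h1
  -- pointwise bound on the integrand
  have hib : ∀ t : ℝ, 0 ≤ t → ∀ s : ℝ, t ≤ s →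
      ‖eT T (ε * (t - s)) (g s)‖ ≤
        (C * Real.exp (-(ε * γA') * t)) * Real.exp ((ε * γA' - γ) * s) := by
    intro t ht s hs
    have hr : ε * (t - s) ≤ 0 := by nlinarith
    have h1 := hAop (ε * (t - s)) hr (g s)
    have h2 := hgb s (le_trans ht hs)
    have hp : (0:ℝ) < Real.exp (-γA' * (ε * (t - s))) := Real.exp_pos _
    calc ‖eT T (ε * (t - s)) (g s)‖
        ≤ Real.exp (-γA' * (ε * (t - s))) * ‖g s‖ := h1
      _ ≤ Real.exp (-γA' * (ε * (t - s))) * (C * Real.exp (-γ * s)) := by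
          apply mul_le_mul_of_nonneg_left h2 hp.le
      _ = C * Real.exp (-γA' * (ε * (t - s)) + -γ * s) := by rw [Real.exp_add]; ring
      _ = (C * Real.exp (-(ε * γA') * t)) * Real.exp ((ε * γA' - γ) * s) := by
          rw [mul_assoc, ← Real.exp_add]
          congr 2
          ring
  -- the dominating function is integrable
  have hdom : ∀ t : ℝ, IntegrableOn
      (fun s => (C * Real.exp (-(ε * γA') * t)) * Real.exp ((ε * γA' - γ) * s))
      (Ioi t) volume := by
    intro t
    have h0 : (0:ℝ) < γ - ε * γA' := by linarith
    have h1 := exp_neg_integrableOn_Ioi t h0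
    have h2 : (fun s : ℝ => (C * Real.exp (-(ε * γA') * t)) * Real.exp ((ε * γA' - γ) * s)) =
        fun s : ℝ => (C * Real.exp (-(ε * γA') * t)) * Real.exp (-(γ - ε * γA') * s) := by
      funext s; congr 2; ring
    rw [h2]
    exact h1.const_mul _
  -- integrability of the integrand
  have hInt : ∀ t : ℝ, 0 ≤ t → IntegrableOn
      (fun s => eT T (ε * (t - s)) (g s)) (Ici t) volume := by
    intro t ht
    rw [integrableOn_Ici_iff_integrableOn_Ioi]
    have hc : ContinuousOn (fun s => eT T (ε * (t - s)) (g s)) (Ici 0) := by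
      apply ContinuousOn.clm_apply
      · exact ((eT_cont0 T).comp
          (continuous_const.mul (continuous_const.sub continuous_id))).continuousOn
      · exact hgc
    apply Integrable.mono' (hdom t)
    · exact ((hc.mono (fun s hs => le_of_lt (lt_of_le_of_lt ht hs))).aestronglyMeasurable
        measurableSet_Ioi)
    · filter_upwards [ae_restrict_mem measurableSet_Ioi] with s hs
      exact hib t ht s (le_of_lt hs)
  simp only [hg', key]
  constructor
  · -- (i) → (ii)
    intro hfw t ht
    refine ⟨hInt t ht, ?_⟩
    have hIoi : IntegrableOn (fun s => eT T (ε * (t - s)) (g s))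
        (Ioi t) volume := (hInt t ht).mono_set Ioi_subset_Ici_self
    have h2 : Tendsto (fun τ => ∫ s in t..τ, eT T (ε * (t - s)) (g s))
        atTop (nhds (∫ s in Ioi t, eT T (ε * (t - s)) (g s))) :=
      intervalIntegral_tendsto_integral_Ioi t hIoi tendsto_id
    have hexp0 : Tendsto (fun τ : ℝ => Real.exp ((ε * γA' - γ) * τ)) atTop (nhds 0) := by
      apply Real.tendsto_exp_atBot.comp
      apply Tendsto.const_mul_atTop_of_neg (show ε * γA' - γ < 0 by linarith) tendsto_id
    have h1 : Tendsto (fun τ => eT T (ε * (t - τ)) (u τ)) atTop (nhds 0) := by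
      have hbnd : ∀ᶠ τ : ℝ in atTop, ‖eT T (ε * (t - τ)) (u τ)‖ ≤
          (Cu * Real.exp (-(ε * γA') * t)) * Real.exp ((ε * γA' - γ) * τ) := by
        filter_upwards [eventually_ge_atTop t] with τ hτ
        have hr : ε * (t - τ) ≤ 0 := by nlinarith
        have hb := hAop (ε * (t - τ)) hr (u τ)
        have h2' := hub τ (le_trans ht hτ)
        have hp : (0:ℝ) < Real.exp (-γA' * (ε * (t - τ))) := Real.exp_pos _
        calc ‖eT T (ε * (t - τ)) (u τ)‖
            ≤ Real.exp (-γA' * (ε * (t - τ))) * ‖u τ‖ := hb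
          _ ≤ Real.exp (-γA' * (ε * (t - τ))) * (Cu * Real.exp (-γ * τ)) :=
              mul_le_mul_of_nonneg_left h2' hp.le
          _ = Cu * Real.exp (-γA' * (ε * (t - τ)) + -γ * τ) := by rw [Real.exp_add]; ring
          _ = (Cu * Real.exp (-(ε * γA') * t)) * Real.exp ((ε * γA' - γ) * τ) := by
              rw [mul_assoc, ← Real.exp_add]
              congr 2
              ring
      have h0 : Tendsto (fun τ : ℝ =>
          (Cu * Real.exp (-(ε * γA') * t)) * Real.exp ((ε * γA' - γ) * τ)) atTop (nhds 0) := by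
        simpa using hexp0.const_mul (Cu * Real.exp (-(ε * γA') * t))
      exact squeeze_zero_norm' hbnd h0
    have h3 : Tendsto (fun τ => eT T (ε * (t - τ)) (u τ) -
        ε • ∫ s in t..τ, eT T (ε * (t - s)) (g s)) atTop
        (nhds (0 - ε • ∫ s in Ioi t, eT T (ε * (t - s)) (g s))) :=
      h1.sub (h2.const_smul ε)
    have h4 : Tendsto (fun _ : ℝ => u t) atTop
        (nhds (0 - ε • ∫ s in Ioi t, eT T (ε * (t - s)) (g s))) := by
      apply h3.congr'
      filter_upwards [eventually_ge_atTop t] with τ hτ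
      exact (hfw t τ ht hτ).symm
    have h5 := tendsto_nhds_unique h4 tendsto_const_nhds
    rw [integral_Ici_eq_integral_Ioi]
    rw [← h5, zero_sub]
  · -- (ii) → (i)
    intro hbw t τ ht htτ
    obtain ⟨hIt, het⟩ := hbw t ht
    obtain ⟨hIτ, heτ⟩ := hbw τ (le_trans ht htτ)
    have hrel : ∀ s : ℝ, eT T (ε * (t - τ))
        (eT T (ε * (τ - s)) (g s)) =
          eT T (ε * (t - s)) (g s) := by
      intro s
      rw [show ε * (t - s) = ε * (t - τ) + ε * (τ - s) by ring, eT_add]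
    have hpull : eT T (ε * (t - τ))
        (∫ s in Ici τ, eT T (ε * (τ - s)) (g s)) =
          ∫ s in Ici τ, eT T (ε * (t - s)) (g s) := by
      rw [← ContinuousLinearMap.integral_comp_comm _ hIτ]
      simp only [hrel]
    have hI1 : IntegrableOn (fun s => eT T (ε * (t - s)) (g s))
        (Ioc t τ) volume := (hInt t ht).mono_set (fun s hs => le_of_lt hs.1)
    have hI2 : IntegrableOn (fun s => eT T (ε * (t - s)) (g s))
        (Ioi τ) volume := (hInt t ht).mono_set (fun s hs => le_trans htτ (le_of_lt hs))
    have hsplit : (∫ s in Ici t, eT T (ε * (t - s)) (g s)) =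
        (∫ s in t..τ, eT T (ε * (t - s)) (g s)) +
          ∫ s in Ici τ, eT T (ε * (t - s)) (g s) := by
      rw [integral_Ici_eq_integral_Ioi, integral_Ici_eq_integral_Ioi,
        intervalIntegral.integral_of_le htτ,
        ← setIntegral_union (Ioc_disjoint_Ioi le_rfl) measurableSet_Ioi hI1 hI2,
        Ioc_union_Ioi_eq_Ioi htτ]
    rw [heτ, map_neg, _root_.map_smul, hpull, het, hsplit, smul_add, neg_add]
    abel
end
end
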